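/- arXiv:1405.4809 — 10 statements merged into one kernel-verified Lean document; each statement's English description precedes it below -/
import Mathlib

section
/- Let f : X → (-∞,+∞] be a c-antiderivative of a multivalued mapping M : X ⇉ Y, and let S be a nonempty subset of dom(M). Then the family 𝒜_{[c,f|_S,M]} is nonempty; that is, there exists a c-convex function h : X → (-∞,+∞] such that G(M) ⊆ G(∂_c h) and h|_S = f|_S. -/
noncomputable section

open scoped Classical

variable {X Y : Type*}

/-- The `c`-transform of `f : X → EReal`, a function on `Y`:
`f^c(y) = sup_{x ∈ X} (c(x,y) - f(x))`. The `c`-transform of a function on `Y` is obtained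
by applying this to the swapped coupling `fun y x => c x y`. -/
def cTransform (c : X → Y → ℝ) (f : X → EReal) : Y → EReal :=
  fun y => ⨆ x, ((c x y : EReal) - f x)

/-- `f` is proper: it takes no value `-∞` (i.e. maps into `(-∞, +∞]`) and is finite somewhere. -/
def ProperFn (f : X → EReal) : Prop :=
  (∀ x, f x ≠ ⊥) ∧ ∃ x, f x ≠ ⊤

/-- `f` is `c`-convex: it is proper and is the `c`-transform of some proper
`g : Y → (-∞, +∞]`. -/
def IsCConvex (c : X → Y → ℝ) (f : X → EReal) : Prop :=
  ProperFn f ∧ ∃ g : Y → EReal, ProperFn g ∧ f = cTransform (fun y x => c x y) g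

/-- The `c`-subdifferential of `f`:
`∂_c f(x) = { y | ∀ x', f(x) + c(x',y) ≤ f(x') + c(x,y) }`. -/
def cSubdiff (c : X → Y → ℝ) (f : X → EReal) (x : X) : Set Y :=
  { y | ∀ x', f x + (c x' y : EReal) ≤ f x' + (c x y : EReal) }

/-- The domain of a multivalued mapping `M : X ⇉ Y`. -/
def mapDom (M : X → Set Y) : Set X := { x | (M x).Nonempty }

/-- The inverse multivalued mapping `M⁻¹ : Y ⇉ X`. -/
def mapInv (M : X → Set Y) : Y → Set X := fun y => { x | y ∈ M x }

/-- The image `M(S) = ⋃_{s ∈ S} M(s)` of a set `S` under a multivalued mapping. -/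
def mapImageOn (M : X → Set Y) (S : Set X) : Set Y := { y | ∃ s ∈ S, y ∈ M s }

/-- The image `Im(M) = ⋃_{x ∈ X} M(x)` of a multivalued mapping. -/
def mapIm (M : X → Set Y) : Set Y := { y | ∃ x, y ∈ M x }

/-- `f` is a `c`-antiderivative of `M`: `f` is proper and `G(M) ⊆ G(∂_c f)`. -/
def IsCAntiderivative (c : X → Y → ℝ) (f : X → EReal) (M : X → Set Y) : Prop :=
  ProperFn f ∧ ∀ x y, y ∈ M x → y ∈ cSubdiff c f x

/-- The family `𝒜_{[c, f|_S, M]}` of all `c`-convex `c`-antiderivatives of `M`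
which coincide with `f` on `S`. -/
def cFamily (c : X → Y → ℝ) (f : X → EReal) (S : Set X) (M : X → Set Y) :
    Set (X → EReal) :=
  { h | IsCConvex c h ∧ (∀ x y, y ∈ M x → y ∈ cSubdiff c h x) ∧ ∀ s ∈ S, h s = f s }

/-- The upper envelope `γ_{[c, f|_S, M]}`. -/
def upperEnv (c : X → Y → ℝ) (f : X → EReal) (S : Set X) (M : X → Set Y) : X → EReal :=
  fun x => ⨆ h ∈ cFamily c f S M, h x

/-- The lower envelope `α_{[c, f|_S, M]}`. -/
def lowerEnv (c : X → Y → ℝ) (f : X → EReal) (S : Set X) (M : X → Set Y) : X → EReal :=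
  fun x => ⨅ h ∈ cFamily c f S M, h x

/-- The indicator function `ι_A` (0 on `A`, `+∞` off `A`). -/
def indicatorE (A : Set X) : X → EReal := fun x => if x ∈ A then 0 else ⊤

/-- Rockafellar's function `R_{[c,M,s]}`: the supremum over `n ≥ 1` and chains
`x_1 = s`, `x_{n+1} = x`, `{(x_i, y_i)}_{i=1}^n ⊆ G(M)` of
`Σ_{i=1}^n [c(x_{i+1}, y_i) - c(x_i, y_i)]` (0-indexed below). -/
def rockafellar (c : X → Y → ℝ) (M : X → Set Y) (s : X) : X → EReal := fun x =>
  ⨆ (n : ℕ) (_ : 0 < n) (xs : ℕ → X) (ys : ℕ → Y)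
      (_ : xs 0 = s ∧ ∀ i < n, ys i ∈ M (xs i)),
    (((∑ i ∈ Finset.range n,
        (c (if i + 1 < n then xs (i + 1) else x) (ys i) - c (xs i) (ys i))) : ℝ) : EReal)

/-- `M` is cyclically monotone of order `n` with respect to `c`: for any `n` pairs
`{(x_i, y_i)}_{i=1}^n ⊆ G(M)`, setting `x_{n+1} = x_1`,
`0 ≤ Σ_{i=1}^n [c(x_i,y_i) - c(x_{i+1},y_i)]` (0-indexed below, cyclically). -/
def IsNCMonotone (c : X → Y → ℝ) (M : X → Set Y) (n : ℕ) : Prop :=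
  ∀ (xs : ℕ → X) (ys : ℕ → Y), (∀ i < n, ys i ∈ M (xs i)) →
    0 ≤ ∑ i ∈ Finset.range n, (c (xs i) (ys i) - c (xs ((i + 1) % n)) (ys i))

/-- `M` is `c`-cyclically monotone: `n`-`c`-monotone for all `n`. -/
def IsCCyclicallyMonotone (c : X → Y → ℝ) (M : X → Set Y) : Prop :=
  ∀ n : ℕ, IsNCMonotone c M n

/-- If `f` is a `c`-antiderivative of `M` and `∅ ≠ S ⊆ dom M`, then the family
`𝒜_{[c, f|_S, M]}` is nonempty. -/
theorem statement0 [Nonempty X] [Nonempty Y] (c : X → Y → ℝ) (f : X → EReal)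
    (M : X → Set Y) (hf : IsCAntiderivative c f M)
    (S : Set X) (hS : S.Nonempty) (hSdom : S ⊆ mapDom M) :
    (cFamily c f S M).Nonempty := by
  obtain ⟨⟨hfbot, x₁, hx₁⟩, hfsub⟩ := hf
  -- f is real-valued on dom M
  have hreal : ∀ x y, y ∈ M x → ∃ r : ℝ, f x = (r : EReal) := by
    intro x y hy
    have h1 := hfsub x y hy x₁
    have hxt : f x ≠ ⊤ := by
      intro ht
      rw [ht] at h1
      have h2 : f x₁ + (c x y : EReal) = ⊤ := top_le_iff.mp (le_trans (by rw [EReal.top_add_of_ne_bot (by simp)]) h1)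
      exact (EReal.add_lt_top hx₁ (EReal.coe_ne_top _)).ne h2
    exact ⟨(f x).toReal, (EReal.coe_toReal hxt (hfbot x)).symm⟩
  set g := cTransform c f with hg
  set h := cTransform (fun y x => c x y) g with hh
  -- value of g on image of M
  have hg_eq : ∀ x y, y ∈ M x → ∀ r : ℝ, f x = (r : EReal) →
      g y = ((c x y - r : ℝ) : EReal) := by
    intro x y hy r hr
    apply le_antisymm
    · apply iSup_le; intro x'
      have h1 := hfsub x y hy x'
      rw [hr] at h1
      rcases eq_or_ne (f x') ⊤ with ht | ht
      · rw [ht]; exact bot_le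
      · obtain ⟨r', hr'⟩ : ∃ r' : ℝ, f x' = (r' : EReal) :=
          ⟨(f x').toReal, (EReal.coe_toReal ht (hfbot x')).symm⟩
        rw [hr'] at h1 ⊢
        rw [← EReal.coe_add, ← EReal.coe_add, EReal.coe_le_coe_iff] at h1
        rw [← EReal.coe_sub, EReal.coe_le_coe_iff]
        linarith
    · have : ((c x y - r : ℝ) : EReal) = (c x y : EReal) - f x := by
        rw [hr, ← EReal.coe_sub]
      rw [this]
      exact le_iSup (fun x' => (c x' y : EReal) - f x') x
  -- g never ⊥
  obtain ⟨r₁, hr₁⟩ : ∃ r₁ : ℝ, f x₁ = (r₁ : EReal) :=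
    ⟨(f x₁).toReal, (EReal.coe_toReal hx₁ (hfbot x₁)).symm⟩
  have hgbot : ∀ y, g y ≠ ⊥ := by
    intro y hb
    have : ((c x₁ y - r₁ : ℝ) : EReal) ≤ g y := by
      rw [EReal.coe_sub, ← hr₁]
      exact le_iSup (fun x' => (c x' y : EReal) - f x') x₁
    rw [hb] at this
    exact (EReal.coe_ne_bot _) (le_bot_iff.mp this)
  -- h ≤ f
  have hhf : ∀ x, h x ≤ f x := by
    intro x
    apply iSup_le; intro y
    rcases eq_or_ne (f x) ⊤ with ht | ht
    · rw [ht]; exact le_top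
    · obtain ⟨r, hr⟩ : ∃ r : ℝ, f x = (r : EReal) :=
        ⟨(f x).toReal, (EReal.coe_toReal ht (hfbot x)).symm⟩
      have hgy : ((c x y - r : ℝ) : EReal) ≤ g y := by
        rw [EReal.coe_sub, ← hr]
        exact le_iSup (fun x' => (c x' y : EReal) - f x') x
      rcases eq_or_ne (g y) ⊤ with hgt | hgt
      · rw [hgt]; show (c x y : EReal) - ⊤ ≤ f x; rw [EReal.sub_top]; exact bot_le
      · obtain ⟨q, hq⟩ : ∃ q : ℝ, g y = (q : EReal) :=
          ⟨(g y).toReal, (EReal.coe_toReal hgt (hgbot y)).symm⟩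
        rw [hq, hr]
        rw [hq, EReal.coe_le_coe_iff] at hgy
        rw [← EReal.coe_sub, EReal.coe_le_coe_iff]
        linarith
  -- h = f on dom M
  have hhfeq : ∀ x y, y ∈ M x → h x = f x := by
    intro x y hy
    obtain ⟨r, hr⟩ := hreal x y hy
    refine le_antisymm (hhf x) ?_
    have : (c x y : EReal) - g y ≤ h x := le_iSup (fun y' => (c x y' : EReal) - g y') y
    rw [hg_eq x y hy r hr, ← EReal.coe_sub] at this
    rw [hr]
    simpa using this
  obtain ⟨s, hsS⟩ := hS
  obtain ⟨y₀, hy₀⟩ := hSdom hsS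
  obtain ⟨rs, hrs⟩ := hreal s y₀ hy₀
  refine ⟨h, ⟨?_, g, ⟨hgbot, y₀, ?_⟩, rfl⟩, ?_, fun x hx => hhfeq x _ (hSdom hx).some_mem⟩
  · -- h proper
    constructor
    · intro x hb
      have : (c x y₀ : EReal) - g y₀ ≤ h x := le_iSup (fun y' => (c x y' : EReal) - g y') y₀
      rw [hg_eq s y₀ hy₀ rs hrs, ← EReal.coe_sub, hb] at this
      exact (EReal.coe_ne_bot _) (le_bot_iff.mp this)
    · exact ⟨s, by rw [hhfeq s y₀ hy₀, hrs]; exact EReal.coe_ne_top _⟩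
  · rw [hg_eq s y₀ hy₀ rs hrs]; exact EReal.coe_ne_top _
  · -- subdifferential
    intro x y hy x'
    obtain ⟨r, hr⟩ := hreal x y hy
    have hhx : h x = (r : EReal) := by rw [hhfeq x y hy, hr]
    have hgy := hg_eq x y hy r hr
    have key : ((c x' y - (c x y - r) : ℝ) : EReal) ≤ h x' := by
      have := le_iSup (fun y' => (c x' y' : EReal) - g y') y
      rwa [hgy, ← EReal.coe_sub] at this
    calc h x + (c x' y : EReal) = ((r + c x' y : ℝ) : EReal) := by rw [hhx, ← EReal.coe_add]
      _ = ((c x' y - (c x y - r) : ℝ) : EReal) + (c x y : EReal) := by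
          rw [← EReal.coe_add]; norm_cast; ring
      _ ≤ h x' + (c x y : EReal) := add_le_add_left key _
end
end

section
/- Let f : X → (-∞,+∞] be a c-antiderivative of a multivalued mapping M : X ⇉ Y, and let S be a nonempty subset of dom(M). Then the upper envelope γ_{[c,f|_S,M]}(x) := sup{ h(x) : h ∈ 𝒜_{[c,f|_S,M]} } itself belongs to 𝒜_{[c,f|_S,M]}; that is, γ_{[c,f|_S,M]} is c-convex, is a c-antiderivative of M, and coincides with f on S. -/
noncomputable section

open scoped Classical

variable {X Y : Type*}

lemma my_addCoe_le_addCoe_iff (a b : EReal) (r s : ℝ) :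
    a + (r : EReal) ≤ b + (s : EReal) ↔ a ≤ b + ((s - r : ℝ) : EReal) := by
  have h : b + ((s - r : ℝ) : EReal) = (b + (s : EReal)) - (r : EReal) := by
    induction b with
    | bot => simp [EReal.bot_add, EReal.bot_sub]
    | coe b => norm_cast; ring
    | top => rw [EReal.top_add_coe, EReal.top_add_coe, EReal.top_sub_coe]
  rw [h, EReal.le_sub_iff_add_le (Or.inl (EReal.coe_ne_bot r)) (Or.inl (EReal.coe_ne_top r))]

lemma my_coe_sub_le (r : ℝ) (a b : EReal) (h : (r : EReal) - a ≤ b) : (r : EReal) - b ≤ a := by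
  induction a with
  | bot => rw [EReal.coe_sub_bot] at h; rw [top_le_iff] at h; simp [h]
  | coe v =>
    induction b with
    | bot =>
      exfalso
      rw [le_bot_iff, ← EReal.coe_sub] at h
      exact EReal.coe_ne_bot _ h
    | coe w =>
      rw [← EReal.coe_sub] at h ⊢
      rw [EReal.coe_le_coe_iff] at h ⊢
      linarith
    | top => simp [EReal.sub_top]
  | top => exact le_top

lemma my_sub_rearrange (v r r' : ℝ) (b : EReal) (hb : b ≠ ⊥)
    (h : (v : EReal) + (r' : EReal) ≤ b + (r : EReal)) :
    (r' : EReal) - b ≤ ((r - v : ℝ) : EReal) := by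
  induction b with
  | bot => simp at hb
  | coe w =>
    rw [← EReal.coe_add, ← EReal.coe_add, EReal.coe_le_coe_iff] at h
    rw [← EReal.coe_sub, EReal.coe_le_coe_iff]; linarith
  | top => simp [EReal.sub_top]

lemma my_coe_sub_real_ne_bot (r : ℝ) (b : EReal) (hb : b ≠ ⊥) (ht : b ≠ ⊤) :
    (r : EReal) - b ≠ ⊥ := by
  lift b to ℝ using ⟨ht, hb⟩
  rw [← EReal.coe_sub]
  exact EReal.coe_ne_bot _

lemma cT_term_le (c : X → Y → ℝ) (p : X → EReal) (x : X) (y : Y) :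
    ((c x y : ℝ) : EReal) - p x ≤ cTransform c p y :=
  le_iSup (fun x => ((c x y : ℝ) : EReal) - p x) x

lemma cT_double_le [Nonempty X] (c : X → Y → ℝ) (p : X → EReal) (x : X) :
    cTransform (fun y x => c x y) (cTransform c p) x ≤ p x :=
  iSup_le fun y => my_coe_sub_le _ _ _ (cT_term_le c p x y)

lemma cT_antitone (c : X → Y → ℝ) {p p' : X → EReal} (h : ∀ x, p x ≤ p' x) (y : Y) :
    cTransform c p' y ≤ cTransform c p y :=
  iSup_mono fun x => EReal.sub_le_sub le_rfl (h x)


/-- The upper envelope `γ_{[c, f|_S, M]}` belongs to `𝒜_{[c, f|_S, M]}`. -/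
theorem statement1 [Nonempty X] [Nonempty Y] (c : X → Y → ℝ) (f : X → EReal)
    (M : X → Set Y) (hf : IsCAntiderivative c f M)
    (S : Set X) (hS : S.Nonempty) (hSdom : S ⊆ mapDom M) :
    upperEnv c f S M ∈ cFamily c f S M := by
  classical
  obtain ⟨⟨hfbot, x0, hfx0⟩, hfsub⟩ := hf
  obtain ⟨s0, hs0⟩ := hS
  -- f is real-valued on the domain of M
  have hfreal : ∀ x ∈ mapDom M, ∃ v : ℝ, f x = (v : EReal) := by
    intro x hx
    obtain ⟨y, hy⟩ := hx
    have h := hfsub x y hy x0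
    have htop : f x ≠ ⊤ := by
      intro hT
      have hw : ((f x0).toReal : EReal) = f x0 := EReal.coe_toReal hfx0 (hfbot x0)
      rw [hT, EReal.top_add_coe, ← hw, ← EReal.coe_add, top_le_iff] at h
      exact EReal.coe_ne_top _ h
    exact ⟨(f x).toReal, (EReal.coe_toReal htop (hfbot x)).symm⟩
  set g0 : Y → EReal := cTransform c f with hg0def
  set h0 : X → EReal := cTransform (fun y x => c x y) g0 with hh0def
  -- key upper bound for g0 at points of M
  have hg0le : ∀ s, ∀ y ∈ M s, ∀ v : ℝ, f s = (v : EReal) →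
      g0 y ≤ ((c s y - v : ℝ) : EReal) := by
    intro s y hy v hv
    refine iSup_le fun x' => ?_
    refine my_sub_rearrange v (c s y) (c x' y) (f x') (hfbot x') ?_
    rw [← hv]
    exact hfsub s y hy x'
  -- h0 = f on dom M
  have h0eq : ∀ x ∈ mapDom M, h0 x = f x := by
    intro x hx
    obtain ⟨v, hv⟩ := hfreal x hx
    obtain ⟨y, hy⟩ := hx
    refine le_antisymm (cT_double_le c f x) ?_
    have h1 : ((v : ℝ) : EReal) ≤ ((c x y : ℝ) : EReal) - g0 y := by
      calc ((v : ℝ) : EReal) = ((c x y : ℝ) : EReal) - ((c x y - v : ℝ) : EReal) := by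
            norm_cast; ring
        _ ≤ ((c x y : ℝ) : EReal) - g0 y :=
            EReal.sub_le_sub le_rfl (hg0le x y hy v hv)
    rw [hv]
    exact h1.trans (le_iSup (fun y => ((c x y : ℝ) : EReal) - g0 y) y)
  -- g0 is proper
  have hfx0' : ∃ v0 : ℝ, f x0 = (v0 : EReal) :=
    ⟨(f x0).toReal, (EReal.coe_toReal hfx0 (hfbot x0)).symm⟩
  obtain ⟨w0, hw0⟩ := hfx0'
  obtain ⟨vs, hvs⟩ := hfreal s0 (hSdom hs0)
  obtain ⟨y0, hy0⟩ := hSdom hs0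
  have hg0bot : ∀ y, g0 y ≠ ⊥ := by
    intro y hb
    have := cT_term_le c f x0 y
    rw [← hg0def, hb, le_bot_iff, hw0, ← EReal.coe_sub] at this
    exact EReal.coe_ne_bot _ this
  have hg0y0 : g0 y0 ≠ ⊤ := by
    intro ht
    have := hg0le s0 y0 hy0 vs hvs
    rw [ht, top_le_iff] at this
    exact EReal.coe_ne_top _ this
  have hg0prop : ProperFn g0 := ⟨hg0bot, y0, hg0y0⟩
  -- h0 is proper
  have h0bot : ∀ x, h0 x ≠ ⊥ := by
    intro x hb
    have := cT_term_le (fun y x => c x y) g0 y0 x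
    rw [← hh0def, hb, le_bot_iff] at this
    exact my_coe_sub_real_ne_bot (c x y0) (g0 y0) (hg0bot y0) hg0y0 this
  have h0top : h0 s0 ≠ ⊤ := by
    rw [h0eq s0 (hSdom hs0), hvs]; exact EReal.coe_ne_top _
  have h0prop : ProperFn h0 := ⟨h0bot, s0, h0top⟩
  -- h0 is a c-antiderivative of M
  have h0anti : ∀ x y, y ∈ M x → y ∈ cSubdiff c h0 x := by
    intro x y hy x'
    have hxdom : x ∈ mapDom M := ⟨y, hy⟩
    obtain ⟨v, hv⟩ := hfreal x hxdom
    rw [h0eq x hxdom, hv, my_addCoe_le_addCoe_iff]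
    have hbound : ((v + c x' y - c x y : ℝ) : EReal) ≤ h0 x' := by
      calc ((v + c x' y - c x y : ℝ) : EReal)
          = ((c x' y : ℝ) : EReal) - ((c x y - v : ℝ) : EReal) := by norm_cast; ring
        _ ≤ ((c x' y : ℝ) : EReal) - g0 y := EReal.sub_le_sub le_rfl (hg0le x y hy v hv)
        _ ≤ h0 x' := le_iSup (fun y => ((c x' y : ℝ) : EReal) - g0 y) y
    calc ((v : ℝ) : EReal)
        = ((v + c x' y - c x y : ℝ) : EReal) + ((c x y - c x' y : ℝ) : EReal) := by
          norm_cast; ring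
      _ ≤ h0 x' + ((c x y - c x' y : ℝ) : EReal) := add_le_add_left hbound _
  have h0mem : h0 ∈ cFamily c f S M :=
    ⟨⟨h0prop, g0, hg0prop, rfl⟩, h0anti, fun s hs => h0eq s (hSdom hs)⟩
  -- the upper envelope
  set γ : X → EReal := upperEnv c f S M with hγdef
  have hγle : ∀ h ∈ cFamily c f S M, ∀ x, h x ≤ γ x := by
    intro h hh x
    exact le_iSup₂_of_le h hh le_rfl
  have γeqS : ∀ s ∈ S, γ s = f s := by
    intro s hs
    refine le_antisymm (iSup₂_le fun h hh => le_of_eq (hh.2.2 s hs)) ?_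
    rw [← h0eq s (hSdom hs)]
    exact hγle h0 h0mem s
  have γanti : ∀ x y, y ∈ M x → y ∈ cSubdiff c γ x := by
    intro x y hy x'
    show γ x + ((c x' y : ℝ) : EReal) ≤ γ x' + ((c x y : ℝ) : EReal)
    rw [my_addCoe_le_addCoe_iff]
    refine iSup₂_le fun h hh => ?_
    have h1 := hh.2.1 x y hy x'
    rw [my_addCoe_le_addCoe_iff] at h1
    exact h1.trans (add_le_add_left (hγle h hh x') _)
  have γbot : ∀ x, γ x ≠ ⊥ := by
    intro x hb
    have := hγle h0 h0mem x
    rw [hb, le_bot_iff] at this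
    exact h0bot x this
  have γtop : γ s0 ≠ ⊤ := by rw [γeqS s0 hs0, hvs]; exact EReal.coe_ne_top _
  have γprop : ProperFn γ := ⟨γbot, s0, γtop⟩
  -- the transform g of γ
  set g : Y → EReal := cTransform c γ with hgdef
  have hgbot : ∀ y, g y ≠ ⊥ := by
    intro y hb
    have := cT_term_le c γ s0 y
    rw [← hgdef, hb, le_bot_iff, γeqS s0 hs0, hvs, ← EReal.coe_sub] at this
    exact EReal.coe_ne_bot _ this
  have hgy0 : g y0 ≠ ⊤ := by
    intro ht
    have hle : g y0 ≤ ((c s0 y0 - vs : ℝ) : EReal) := by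
      refine iSup_le fun x => ?_
      refine my_sub_rearrange vs (c s0 y0) (c x y0) (γ x) (γbot x) ?_
      have := γanti s0 y0 hy0 x
      rwa [γeqS s0 hs0, hvs] at this
    rw [ht, top_le_iff] at hle
    exact EReal.coe_ne_top _ hle
  have hgprop : ProperFn g := ⟨hgbot, y0, hgy0⟩
  -- γ equals the double transform
  have γconv : γ = cTransform (fun y x => c x y) g := by
    funext x
    refine le_antisymm ?_ (cT_double_le c γ x)
    refine iSup₂_le fun h hh => ?_
    obtain ⟨hhp, q, hq, heq⟩ := hh.1
    have step1 : ∀ x', h x' ≤ cTransform (fun y x => c x y) (cTransform c h) x' := by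
      intro x'
      rw [heq]
      exact cT_antitone (fun y x => c x y) (cT_double_le (fun y x => c x y) q) x'
    have step2 : ∀ x', cTransform (fun y x => c x y) (cTransform c h) x'
        ≤ cTransform (fun y x => c x y) (cTransform c γ) x' :=
      fun x' => cT_antitone (fun y x => c x y) (cT_antitone c (hγle h hh)) x'
    exact (step1 x).trans (step2 x)
  exact ⟨⟨γprop, g, hgprop, γconv⟩, γanti, γeqS⟩
end
end

section
/- Let f : X → (-∞,+∞] be a c-antiderivative of a multivalued mapping M : X ⇉ Y, and let S be a nonempty subset of dom(M). Then the lower envelope α_{[c,f|_S,M]}(x) := inf{ h(x) : h ∈ 𝒜_{[c,f|_S,M]} } itself belongs to 𝒜_{[c,f|_S,M]}; that is, α_{[c,f|_S,M]} is c-convex, is a c-antiderivative of M, and coincides with f on S. -/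
noncomputable section

open scoped Classical

variable {X Y : Type*}

private lemma ereal_exists_real {a : EReal} (hb : a ≠ ⊥) (ht : a ≠ ⊤) : ∃ t : ℝ, a = ↑t := by
  induction a using EReal.rec with
  | bot => exact absurd rfl hb
  | coe t => exact ⟨t, rfl⟩
  | top => exact absurd rfl ht

private lemma ereal_add_coe_sub_coe (a : EReal) (r s : ℝ) :
    a + (r : EReal) - (s : EReal) = a + ((r - s : ℝ) : EReal) := by
  induction a using EReal.rec with
  | bot => simp [sub_eq_add_neg]
  | coe t => norm_cast; ring
  | top => rw [EReal.top_add_coe, EReal.top_add_coe, EReal.top_sub_coe]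

private lemma ereal_coe_sub_coe_sub_le (r : ℝ) (a : EReal) :
    (r : EReal) - ((r : EReal) - a) ≤ a := by
  induction a using EReal.rec with
  | bot => simp [sub_eq_add_neg]
  | coe t => norm_cast; ring_nf; exact le_rfl
  | top => exact le_top

private lemma ereal_add_le_add_right_iff {a b : EReal} (r : ℝ) :
    a + (r : EReal) ≤ b + (r : EReal) ↔ a ≤ b := by
  constructor
  · intro h
    rwa [← EReal.le_sub_iff_add_le (Or.inl (EReal.coe_ne_bot r))
        (Or.inl (EReal.coe_ne_top r)), EReal.add_sub_cancel_right] at h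
  · intro h; exact add_le_add_left h _

private lemma ereal_ne_bot_of_coe_le {a : EReal} {r : ℝ} (h : (r : EReal) ≤ a) : a ≠ ⊥ :=
  fun hb => (EReal.coe_ne_bot r) (le_bot_iff.1 (hb ▸ h))

/-- If `f` is proper and `y ∈ ∂_c f(x)`, then `f x` is a real number. -/
private lemma subdiff_real {c : X → Y → ℝ} {f : X → EReal} (hp : ProperFn f) {x : X} {y : Y}
    (hy : y ∈ cSubdiff c f x) : ∃ t : ℝ, f x = (t : EReal) := by
  obtain ⟨hbot, x0, hx0⟩ := hp
  refine ereal_exists_real (hbot x) (fun htop => ?_)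
  have h := hy x0
  rw [htop, EReal.top_add_coe] at h
  exact (EReal.add_lt_top hx0 (EReal.coe_ne_top _)).ne (top_le_iff.1 h)

/-- If `f` is proper, `y ∈ ∂_c f(x)` and `f x = t`, then `f^c(y) = c(x,y) - t`. -/
private lemma ctransform_at {c : X → Y → ℝ} {f : X → EReal} (hp : ProperFn f) {x : X} {y : Y}
    (hy : y ∈ cSubdiff c f x) {t : ℝ} (hfx : f x = (t : EReal)) :
    cTransform c f y = ((c x y - t : ℝ) : EReal) := by
  refine le_antisymm (iSup_le fun x' => ?_) ?_
  · rcases eq_or_ne (f x') ⊤ with h | h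
    · rw [h, EReal.sub_top]
      exact bot_le
    · obtain ⟨s, hs⟩ := ereal_exists_real (hp.1 x') h
      have h2 := hy x'
      rw [hfx, hs] at h2
      rw [hs, ← EReal.coe_sub, EReal.coe_le_coe_iff]
      rw [← EReal.coe_add, ← EReal.coe_add, EReal.coe_le_coe_iff] at h2
      linarith
  · have h := le_iSup (fun x' => ((c x' y : ℝ) : EReal) - f x') x
    rwa [hfx, ← EReal.coe_sub] at h

/-- The double `c`-transform is dominated by the original function. -/
private lemma dd_le (c : X → Y → ℝ) (f : X → EReal) (x : X) :
    cTransform (fun y x => c x y) (cTransform c f) x ≤ f x := by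
  refine iSup_le fun y => ?_
  have h1 : ((c x y : ℝ) : EReal) - f x ≤ cTransform c f y :=
    le_iSup (fun x' => ((c x' y : ℝ) : EReal) - f x') x
  calc ((c x y : ℝ) : EReal) - cTransform c f y
      ≤ ((c x y : ℝ) : EReal) - (((c x y : ℝ) : EReal) - f x) := EReal.sub_le_sub le_rfl h1
    _ ≤ f x := ereal_coe_sub_coe_sub_le _ _

/-- Key lemma: the double `c`-transform of a `c`-antiderivative of `M` belongs to the family. -/
private lemma key_lemma [Nonempty X] [Nonempty Y] (c : X → Y → ℝ) (M : X → Set Y)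
    (f : X → EReal) (hf : IsCAntiderivative c f M)
    (S : Set X) (hS : S.Nonempty) (hSdom : S ⊆ mapDom M) :
    cTransform (fun y x => c x y) (cTransform c f) ∈ cFamily c f S M := by
  obtain ⟨hp, hsub⟩ := hf
  set g := cTransform c f with hg
  set dd := cTransform (fun y x => c x y) g with hdd
  obtain ⟨s, hs⟩ := hS
  obtain ⟨ys, hys⟩ := hSdom hs
  have hyss : ys ∈ cSubdiff c f s := hsub s ys hys
  obtain ⟨ts, hts⟩ := subdiff_real hp hyss
  have hgys : g ys = ((c s ys - ts : ℝ) : EReal) := ctransform_at hp hyss hts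
  have ddeq : ∀ x y, y ∈ cSubdiff c f x → dd x = f x := by
    intro x y hy
    obtain ⟨t, ht⟩ := subdiff_real hp hy
    have hgy : g y = ((c x y - t : ℝ) : EReal) := ctransform_at hp hy ht
    refine le_antisymm (dd_le c f x) ?_
    have h1 : ((c x y : ℝ) : EReal) - g y ≤ dd x :=
      le_iSup (fun y' => ((c x y' : ℝ) : EReal) - g y') y
    rw [hgy, ← EReal.coe_sub] at h1
    rw [ht]
    have : ((t : ℝ) : EReal) = ((c x y - (c x y - t) : ℝ) : EReal) := by norm_num
    rw [this]; exact h1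
  have hpg : ProperFn g := by
    constructor
    · intro y
      obtain ⟨x0, hx0⟩ := hp.2
      obtain ⟨t0, ht0⟩ := ereal_exists_real (hp.1 x0) hx0
      have h1 : ((c x0 y : ℝ) : EReal) - f x0 ≤ g y :=
        le_iSup (fun x' => ((c x' y : ℝ) : EReal) - f x') x0
      rw [ht0, ← EReal.coe_sub] at h1
      exact ereal_ne_bot_of_coe_le h1
    · exact ⟨ys, by rw [hgys]; exact EReal.coe_ne_top _⟩
  have hpdd : ProperFn dd := by
    constructor
    · intro x
      have h1 : ((c x ys : ℝ) : EReal) - g ys ≤ dd x :=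
        le_iSup (fun y' => ((c x y' : ℝ) : EReal) - g y') ys
      rw [hgys, ← EReal.coe_sub] at h1
      exact ereal_ne_bot_of_coe_le h1
    · exact ⟨s, by rw [ddeq s ys hyss, hts]; exact EReal.coe_ne_top _⟩
  have ddsub : ∀ x y, y ∈ M x → y ∈ cSubdiff c dd x := by
    intro x y hy x'
    have hyx := hsub x y hy
    obtain ⟨t, ht⟩ := subdiff_real hp hyx
    have hgy : g y = ((c x y - t : ℝ) : EReal) := ctransform_at hp hyx ht
    have hddx : dd x = ((t : ℝ) : EReal) := by rw [ddeq x y hyx, ht]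
    have h1 : ((c x' y : ℝ) : EReal) - g y ≤ dd x' :=
      le_iSup (fun y' => ((c x' y' : ℝ) : EReal) - g y') y
    rw [hgy, ← EReal.coe_sub] at h1
    rw [hddx]
    calc ((t : ℝ) : EReal) + ((c x' y : ℝ) : EReal)
        = ((c x' y - (c x y - t) : ℝ) : EReal) + ((c x y : ℝ) : EReal) := by
          rw [← EReal.coe_add, ← EReal.coe_add, EReal.coe_eq_coe_iff]; ring
      _ ≤ dd x' + ((c x y : ℝ) : EReal) := add_le_add_left h1 _
  refine ⟨⟨hpdd, g, hpg, rfl⟩, ddsub, fun s' hs' => ?_⟩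
  obtain ⟨y', hy'⟩ := hSdom hs'
  exact ddeq s' y' (hsub s' y' hy')

/-- The lower envelope `α_{[c, f|_S, M]}` belongs to `𝒜_{[c, f|_S, M]}`. -/
theorem statement2 [Nonempty X] [Nonempty Y] (c : X → Y → ℝ) (f : X → EReal)
    (M : X → Set Y) (hf : IsCAntiderivative c f M)
    (S : Set X) (hS : S.Nonempty) (hSdom : S ⊆ mapDom M) :
    lowerEnv c f S M ∈ cFamily c f S M := by
  obtain ⟨hp, hsub⟩ := hf
  have h0 := key_lemma c M f ⟨hp, hsub⟩ S hS hSdom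
  set A := cFamily c f S M with hA
  set α := lowerEnv c f S M with hα
  obtain ⟨s, hs⟩ := hS
  obtain ⟨ys, hys⟩ := hSdom hs
  have hyss : ys ∈ cSubdiff c f s := hsub s ys hys
  obtain ⟨ts, hts⟩ := subdiff_real hp hyss
  -- α agrees with f on S
  have haS : ∀ s' ∈ S, α s' = f s' := by
    intro s' hs'
    refine le_antisymm ?_ ?_
    · have h1 : α s' ≤ cTransform (fun y x => c x y) (cTransform c f) s' := iInf₂_le _ h0
      rwa [h0.2.2 s' hs'] at h1
    · exact le_iInf₂ fun h hh => (hh.2.2 s' hs').ge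
  -- α is an antiderivative of M
  have hαsub : ∀ x y, y ∈ M x → y ∈ cSubdiff c α x := by
    intro x y hy x'
    have key : ∀ h ∈ A, α x + ((c x' y : ℝ) : EReal) - ((c x y : ℝ) : EReal) ≤ h x' := by
      intro h hh
      rw [EReal.sub_le_iff_le_add (Or.inl (EReal.coe_ne_bot _)) (Or.inr (hh.1.1.1 x'))]
      calc α x + ((c x' y : ℝ) : EReal) ≤ h x + ((c x' y : ℝ) : EReal) :=
            add_le_add_left (iInf₂_le _ hh) _
        _ ≤ h x' + ((c x y : ℝ) : EReal) := hh.2.1 x y hy x'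
    have h2 : α x + ((c x' y : ℝ) : EReal) - ((c x y : ℝ) : EReal) ≤ α x' := le_iInf₂ key
    have h3 := add_le_add_left h2 ((c x y : ℝ) : EReal)
    calc α x + ((c x' y : ℝ) : EReal)
        = α x + ((c x' y : ℝ) : EReal) - ((c x y : ℝ) : EReal) + ((c x y : ℝ) : EReal) := by
          rw [ereal_add_coe_sub_coe, add_assoc, ← EReal.coe_add]
          congr 1
          rw [EReal.coe_eq_coe_iff]
          ring
      _ ≤ α x' + ((c x y : ℝ) : EReal) := h3
  -- α is proper
  have hpα : ProperFn α := by
    constructor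
    · intro x
      have key : ∀ h ∈ A, ((ts + c x ys - c s ys : ℝ) : EReal) ≤ h x := by
        intro h hh
        have h1 := hh.2.1 s ys hys x
        rw [hh.2.2 s hs, hts] at h1
        rw [← ereal_add_le_add_right_iff (c s ys)]
        calc ((ts + c x ys - c s ys : ℝ) : EReal) + ((c s ys : ℝ) : EReal)
            = ((ts : ℝ) : EReal) + ((c x ys : ℝ) : EReal) := by
              rw [← EReal.coe_add, ← EReal.coe_add, EReal.coe_eq_coe_iff]; ring
          _ ≤ h x + ((c s ys : ℝ) : EReal) := h1
      exact ereal_ne_bot_of_coe_le (le_iInf₂ key)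
    · refine ⟨s, ?_⟩
      rw [haS s hs, hts]
      exact EReal.coe_ne_top _
  -- α equals its double c-transform, hence is c-convex
  have hαanti : IsCAntiderivative c α M := ⟨hpα, hαsub⟩
  have hk := key_lemma c M α hαanti S ⟨s, hs⟩ hSdom
  have hkA : cTransform (fun y x => c x y) (cTransform c α) ∈ A := by
    refine ⟨hk.1, hk.2.1, fun s' hs' => ?_⟩
    rw [hk.2.2 s' hs', haS s' hs']
  have hαeq : α = cTransform (fun y x => c x y) (cTransform c α) := by
    funext x
    exact le_antisymm (iInf₂_le _ hkA) (dd_le c α x)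
  obtain ⟨_, g, hpg, hgeq⟩ := hk.1
  exact ⟨⟨hpα, g, hpg, hαeq.trans hgeq⟩, hαsub, haS⟩
end
end

section
/- Let f : X → (-∞,+∞] be a c-antiderivative of a multivalued mapping M : X ⇉ Y, and let S be a nonempty subset of dom(M). If h : X → (-∞,+∞] is c-convex, then h ∈ 𝒜_{[c,f|_S,M]} if and only if h^c ∈ 𝒜_{[c,f^c|_{M(S)},M⁻¹]}. -/
noncomputable section

open scoped Classical

variable {X Y : Type*}

section Helpers

variable {c : X → Y → ℝ}

private lemma ereal_finite {a : EReal} (hbot : a ≠ ⊥) (htop : a ≠ ⊤) :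
    ∃ r : ℝ, a = (r : EReal) := ⟨a.toReal, (EReal.coe_toReal htop hbot).symm⟩

/-- On the subdifferential domain, a proper function is finite. -/
lemma subdiff_finite {f : X → EReal} (hf : ProperFn f) {x : X} {y : Y}
    (hy : y ∈ cSubdiff c f x) : ∃ r : ℝ, f x = (r : EReal) := by
  obtain ⟨hbot, x0, hx0⟩ := hf
  obtain ⟨r0, hr0⟩ := ereal_finite (hbot x0) hx0
  refine ereal_finite (hbot x) ?_
  intro htop
  have h1 := hy x0
  rw [htop, hr0, EReal.top_add_coe, ← EReal.coe_add] at h1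
  rw [top_le_iff] at h1
  exact (EReal.coe_ne_top _) h1

/-- Value of the c-transform at a subgradient point. -/
lemma ctrans_eq_of_subdiff {f : X → EReal} (hf : ProperFn f) {x : X} {y : Y}
    (hy : y ∈ cSubdiff c f x) {r : ℝ} (hr : f x = (r : EReal)) :
    cTransform c f y = ((c x y - r : ℝ) : EReal) := by
  apply le_antisymm
  · refine iSup_le fun x' => ?_
    have hb := hf.1 x'
    rcases eq_or_ne (f x') ⊤ with ht | ht
    · rw [ht, EReal.sub_top]; exact bot_le
    · obtain ⟨r', hr'⟩ := ereal_finite hb ht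
      have h1 := hy x'
      rw [hr, hr', ← EReal.coe_add, ← EReal.coe_add, EReal.coe_le_coe_iff] at h1
      rw [hr', ← EReal.coe_sub, EReal.coe_le_coe_iff]
      linarith
  · have := le_iSup (fun x' => ((c x' y : EReal) - f x')) x
    rwa [hr, ← EReal.coe_sub] at this

/-- Subdifferential swap: `y ∈ ∂_c f(x)` implies `x ∈ ∂_{c̃} f^c(y)`. -/
lemma subdiff_swap {f : X → EReal} (hf : ProperFn f) {x : X} {y : Y}
    (hy : y ∈ cSubdiff c f x) :
    x ∈ cSubdiff (fun y x => c x y) (cTransform c f) y := by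
  obtain ⟨r, hr⟩ := subdiff_finite hf hy
  intro y'
  have h1 : cTransform c f y = ((c x y - r : ℝ) : EReal) := ctrans_eq_of_subdiff hf hy hr
  have h2 : ((c x y' - r : ℝ) : EReal) ≤ cTransform c f y' := by
    have := le_iSup (fun x' => ((c x' y : EReal) - f x')) x
    have := le_iSup (fun x' => ((c x' y' : EReal) - f x')) x
    rwa [hr, ← EReal.coe_sub] at this
  calc cTransform c f y + ((c x y' : ℝ) : EReal)
      = ((c x y' - r : ℝ) : EReal) + ((c x y : ℝ) : EReal) := by
        rw [h1]; norm_cast; ring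
    _ ≤ cTransform c f y' + ((c x y : ℝ) : EReal) := add_le_add_left h2 _

/-- The double transform is always below the original (when the function avoids `⊥`). -/
lemma ctrans_ctrans_le {f : X → EReal} (hb : ∀ x, f x ≠ ⊥) (x : X) :
    cTransform (fun y x => c x y) (cTransform c f) x ≤ f x := by
  refine iSup_le fun y => ?_
  rcases eq_or_ne (f x) ⊤ with ht | ht
  · rw [ht]; exact le_top
  obtain ⟨r, hr⟩ := ereal_finite (hb x) ht
  have h2 : ((c x y - r : ℝ) : EReal) ≤ cTransform c f y := by
    have := le_iSup (fun x' => ((c x' y : EReal) - f x')) x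
    rwa [hr, ← EReal.coe_sub] at this
  rcases eq_or_ne (cTransform c f y) ⊤ with ht' | ht'
  · rw [ht', EReal.sub_top]; exact bot_le
  have hb' : cTransform c f y ≠ ⊥ := by
    intro hB
    rw [hB, le_bot_iff] at h2
    exact (EReal.coe_ne_bot _) h2
  obtain ⟨t, hT⟩ := ereal_finite hb' ht'
  rw [hT, EReal.coe_le_coe_iff] at h2
  rw [hT, hr, ← EReal.coe_sub, EReal.coe_le_coe_iff]
  linarith

/-- The c-transform is antitone. -/
lemma ctrans_antitone {f g : X → EReal} (hfg : ∀ x, f x ≤ g x) (y : Y) :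
    cTransform c g y ≤ cTransform c f y :=
  iSup_mono fun x => EReal.sub_le_sub le_rfl (hfg x)

/-- For c-convex functions, the double transform is the identity. -/
lemma ctrans_ctrans_eq {h : X → EReal} (hconv : IsCConvex c h) :
    cTransform (fun y x => c x y) (cTransform c h) = h := by
  obtain ⟨hp, g, hg, hgh⟩ := hconv
  funext x
  refine le_antisymm (ctrans_ctrans_le hp.1 x) ?_
  have key : ∀ y, cTransform c h y ≤ g y := by
    intro y
    have : cTransform c (cTransform (fun y x => c x y) g) y ≤ g y :=
      ctrans_ctrans_le (c := fun y x => c x y) hg.1 y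
    rwa [← hgh] at this
  have := ctrans_antitone (c := fun y x => c x y) key x
  calc h x = cTransform (fun y x => c x y) g x := by rw [hgh]
    _ ≤ cTransform (fun y x => c x y) (cTransform c h) x := this

end Helpers

/-- If `h` is `c`-convex, then `h ∈ 𝒜_{[c,f|_S,M]}` iff
`h^c ∈ 𝒜_{[c, f^c|_{M(S)}, M⁻¹]}`. -/
theorem statement4 [Nonempty X] [Nonempty Y] (c : X → Y → ℝ) (f : X → EReal)
    (M : X → Set Y) (hf : IsCAntiderivative c f M)
    (S : Set X) (hS : S.Nonempty) (hSdom : S ⊆ mapDom M)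
    (h : X → EReal) (hconv : IsCConvex c h) :
    h ∈ cFamily c f S M ↔
      cTransform c h ∈
        cFamily (fun y x => c x y) (cTransform c f) (mapImageOn M S) (mapInv M) := by
  constructor
  · rintro ⟨-, hanti, heq⟩
    obtain ⟨s, hsS⟩ := hS
    obtain ⟨y0, hy0⟩ := hSdom hsS
    have hhs : y0 ∈ cSubdiff c h s := hanti s y0 hy0
    obtain ⟨r0, hr0⟩ := subdiff_finite hconv.1 hhs
    refine ⟨⟨⟨fun y => ?_, ⟨y0, ?_⟩⟩, h, hconv.1, rfl⟩, ?_, ?_⟩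
    · -- cTransform c h y ≠ ⊥
      intro hB
      have h2 : ((c s y - r0 : ℝ) : EReal) ≤ cTransform c h y := by
        have := le_iSup (fun x' => ((c x' y : EReal) - h x')) s
        rwa [hr0, ← EReal.coe_sub] at this
      rw [hB, le_bot_iff] at h2
      exact (EReal.coe_ne_bot _) h2
    · rw [ctrans_eq_of_subdiff hconv.1 hhs hr0]
      exact EReal.coe_ne_top _
    · rintro y x hxy
      exact subdiff_swap hconv.1 (hanti x y hxy)
    · rintro y ⟨t, htS, hyt⟩
      have hft : y ∈ cSubdiff c f t := hf.2 t y hyt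
      obtain ⟨r, hr⟩ := subdiff_finite hf.1 hft
      have hhr : h t = (r : EReal) := by rw [heq t htS, hr]
      rw [ctrans_eq_of_subdiff hconv.1 (hanti t y hyt) hhr,
        ctrans_eq_of_subdiff hf.1 hft hr]
  · rintro ⟨hconv', hanti', heq'⟩
    have hdd : cTransform (fun y x => c x y) (cTransform c h) = h :=
      ctrans_ctrans_eq hconv
    refine ⟨hconv, fun x y hxy => ?_, fun s hsS => ?_⟩
    · have h1 : x ∈ cSubdiff (fun y x => c x y) (cTransform c h) y :=
        hanti' y x hxy
      have h2 := subdiff_swap (c := fun y x => c x y) hconv'.1 h1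
      rw [hdd] at h2
      exact h2
    · obtain ⟨y, hyMs⟩ := hSdom hsS
      have hft : y ∈ cSubdiff c f s := hf.2 s y hyMs
      obtain ⟨r, hr⟩ := subdiff_finite hf.1 hft
      have hfc : cTransform c f y = ((c s y - r : ℝ) : EReal) :=
        ctrans_eq_of_subdiff hf.1 hft hr
      have hhc : cTransform c h y = ((c s y - r : ℝ) : EReal) := by
        rw [heq' y ⟨s, hsS, hyMs⟩, hfc]
      have h1 : s ∈ cSubdiff (fun y x => c x y) (cTransform c h) y :=
        hanti' y s hyMs
      have h2 := ctrans_eq_of_subdiff (c := fun y x => c x y) hconv'.1 h1 hhc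
      rw [hdd] at h2
      rw [h2, hr]
      norm_num
end
end

section
/- Let f : X → (-∞,+∞] be a c-antiderivative of a multivalued mapping M : X ⇉ Y and take S = dom(M). Then the pointwise infimum of the family 𝒜_{[c,f|_{dom(M)},M]} satisfies, for every x ∈ X, α_{[c,f|_{dom(M)},M]}(x) = (f^c + ι_{Im(M)})^c(x) = sup_{(s,t) ∈ G(M)} [ f(s) + c(x,t) − c(s,t) ], where ι_{Im(M)} is the indicator function of the image Im(M) = ∪_{x∈X} M(x). -/
noncomputable section

open scoped Classical

variable {X Y : Type*}

/-- Helper: finite `EReal`s are real coercions. -/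
private lemma eReal_exists_real {z : EReal} (h1 : z ≠ ⊤) (h2 : z ≠ ⊥) :
    ∃ r : ℝ, z = (r : EReal) :=
  ⟨z.toReal, (EReal.coe_toReal h1 h2).symm⟩

/-- Helper: rearranging a mixed real/EReal inequality. -/
private lemma eReal_key {r a b : ℝ} {z : EReal} (hz : z ≠ ⊥)
    (h : (r : EReal) + (a : EReal) ≤ z + (b : EReal)) :
    ((r + (a - b) : ℝ) : EReal) ≤ z := by
  rcases eq_or_ne z ⊤ with hz' | hz'
  · simp [hz']
  · obtain ⟨r', hr'⟩ := eReal_exists_real hz' hz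
    rw [hr'] at h ⊢
    rw [← EReal.coe_add, ← EReal.coe_add, EReal.coe_le_coe_iff] at h
    exact EReal.coe_le_coe_iff.2 (by linarith)

/-- Helper: `f` is finite on `dom M`. -/
private lemma cAnti_finite {c : X → Y → ℝ} {f : X → EReal} {M : X → Set Y}
    (hf : IsCAntiderivative c f M) {s : X} (hs : s ∈ mapDom M) :
    ∃ r : ℝ, f s = (r : EReal) := by
  obtain ⟨t, htM⟩ := hs
  obtain ⟨x₁, hx₁⟩ := hf.1.2
  refine eReal_exists_real ?_ (hf.1.1 s)
  intro htop
  have h := hf.2 s t htM x₁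
  rw [htop, EReal.top_add_coe, top_le_iff] at h
  obtain ⟨r', hr'⟩ := eReal_exists_real hx₁ (hf.1.1 x₁)
  rw [hr', ← EReal.coe_add] at h
  exact EReal.coe_ne_top _ h

/-- Helper: value of the `c`-transform of `f` at points of `Im M`. -/
private lemma cAnti_cTransform {c : X → Y → ℝ} {f : X → EReal} {M : X → Set Y}
    (hf : IsCAntiderivative c f M) {s : X} {t : Y} (ht : t ∈ M s)
    {r : ℝ} (hr : f s = (r : EReal)) :
    cTransform c f t = ((c s t - r : ℝ) : EReal) := by
  apply le_antisymm
  · apply iSup_le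
    intro x'
    rcases eq_or_ne (f x') ⊤ with h' | h'
    · rw [h', EReal.sub_top]
      exact bot_le
    · obtain ⟨r', hr'⟩ := eReal_exists_real h' (hf.1.1 x')
      have h := hf.2 s t ht x'
      rw [hr, hr'] at h
      rw [← EReal.coe_add, ← EReal.coe_add, EReal.coe_le_coe_iff] at h
      rw [hr', ← EReal.coe_sub]
      exact EReal.coe_le_coe_iff.2 (by linarith)
  · have : ((c s t - r : ℝ) : EReal) = (c s t : EReal) - f s := by
      rw [hr, ← EReal.coe_sub]
    rw [this]
    exact le_iSup (fun x' => (c x' t : EReal) - f x') s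

/-- In the case `S = dom M`, the lower envelope satisfies, for every `x`,
`α_{[c, f|_{dom M}, M]}(x) = (f^c + ι_{Im M})^c(x) = sup_{(s,t) ∈ G(M)} [f(s) + c(x,t) - c(s,t)]`. -/
theorem statement7 [Nonempty X] [Nonempty Y] (c : X → Y → ℝ) (f : X → EReal)
    (M : X → Set Y) (hf : IsCAntiderivative c f M)
    (hdom : (mapDom M).Nonempty) :
    ∀ x : X,
      lowerEnv c f (mapDom M) M x =
          cTransform (fun y x => c x y)
            (fun y => cTransform c f y + indicatorE (mapIm M) y) x ∧
        lowerEnv c f (mapDom M) M x =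
          ⨆ (p : X × Y) (_ : p.2 ∈ M p.1),
            (f p.1 + ((c x p.2 - c p.1 p.2 : ℝ) : EReal)) := by
  obtain ⟨s₀, t₀, ht₀⟩ : ∃ s t, t ∈ M s := hdom.imp fun s hs => hs
  obtain ⟨r₀, hr₀⟩ := cAnti_finite hf ⟨t₀, ht₀⟩
  set g : Y → EReal := fun y => cTransform c f y + indicatorE (mapIm M) y with hg
  set H : X → EReal := fun x =>
    ⨆ (p : X × Y) (_ : p.2 ∈ M p.1), (f p.1 + ((c x p.2 - c p.1 p.2 : ℝ) : EReal)) with hHdef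
  -- value of g on Im M
  have hgIm : ∀ s t, t ∈ M s → ∀ r : ℝ, f s = (r : EReal) →
      g t = ((c s t - r : ℝ) : EReal) := by
    intro s t ht r hr
    have hmem : t ∈ mapIm M := ⟨s, ht⟩
    have : indicatorE (mapIm M) t = 0 := if_pos hmem
    simp only [hg, this, add_zero]
    exact cAnti_cTransform hf ht hr
  -- value of g off Im M
  have hgOut : ∀ t, t ∉ mapIm M → g t = ⊤ := by
    intro t htIm
    have hne : cTransform c f t ≠ ⊥ := by
      obtain ⟨x₁, hx₁⟩ := hf.1.2
      obtain ⟨r₁, hr₁⟩ := eReal_exists_real hx₁ (hf.1.1 x₁)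
      have hle : ((c x₁ t - r₁ : ℝ) : EReal) ≤ cTransform c f t := by
        have : ((c x₁ t - r₁ : ℝ) : EReal) = (c x₁ t : EReal) - f x₁ := by
          rw [hr₁, ← EReal.coe_sub]
        rw [this]
        exact le_iSup (fun x' => (c x' t : EReal) - f x') x₁
      exact fun h => EReal.coe_ne_bot _ (le_bot_iff.1 (h ▸ hle))
    have : indicatorE (mapIm M) t = ⊤ := by simp [indicatorE, htIm]
    rw [hg]
    simp only
    rw [this, EReal.add_top_of_ne_bot hne]
  -- H equals the c-transform of g
  have hHT : ∀ x, cTransform (fun y x => c x y) g x = H x := by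
    intro x
    apply le_antisymm
    · apply iSup_le
      intro y
      by_cases hy : y ∈ mapIm M
      · obtain ⟨s, hs⟩ := hy
        obtain ⟨r, hr⟩ := cAnti_finite hf ⟨y, hs⟩
        rw [hgIm s y hs r hr, ← EReal.coe_sub]
        have : ((c x y - (c s y - r) : ℝ) : EReal) =
            f s + ((c x y - c s y : ℝ) : EReal) := by
          rw [hr]; norm_cast; ring
        rw [this]
        exact le_iSup₂ (f := fun (p : X × Y) (_ : p.2 ∈ M p.1) =>
          f p.1 + ((c x p.2 - c p.1 p.2 : ℝ) : EReal)) (s, y) hs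
      · rw [hgOut y hy, EReal.sub_top]
        exact bot_le
    · apply iSup₂_le
      rintro ⟨s, t⟩ ht
      simp only at ht ⊢
      obtain ⟨r, hr⟩ := cAnti_finite hf ⟨t, ht⟩
      have h1 : f s + ((c x t - c s t : ℝ) : EReal) = (c x t : EReal) - g t := by
        rw [hgIm s t ht r hr, hr]; norm_cast; ring
      rw [h1]
      exact le_iSup (fun y => (c x y : EReal) - g y) t
  -- H agrees with f on dom M
  have hHf : ∀ s ∈ mapDom M, H s = f s := by
    rintro s ⟨t, ht⟩
    apply le_antisymm
    · apply iSup₂_le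
      rintro ⟨s', t'⟩ ht'
      simp only at ht' ⊢
      obtain ⟨r', hr'⟩ := cAnti_finite hf ⟨t', ht'⟩
      have h := hf.2 s' t' ht' s
      rw [hr'] at h ⊢
      rw [← EReal.coe_add]
      exact eReal_key (hf.1.1 s) h
    · have h0 : f s = f s + ((c s t - c s t : ℝ) : EReal) := by
        norm_num
      rw [h0]
      exact le_iSup₂ (f := fun (p : X × Y) (_ : p.2 ∈ M p.1) =>
        f p.1 + ((c s p.2 - c p.1 p.2 : ℝ) : EReal)) (s, t) ht
  -- lower bounds on H
  have hHlb : ∀ x s t, t ∈ M s → ∀ r : ℝ, f s = (r : EReal) →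
      ((r + (c x t - c s t) : ℝ) : EReal) ≤ H x := by
    intro x s t ht r hr
    have : ((r + (c x t - c s t) : ℝ) : EReal) =
        f s + ((c x t - c s t : ℝ) : EReal) := by
      rw [hr, ← EReal.coe_add]
    rw [this]
    exact le_iSup₂ (f := fun (p : X × Y) (_ : p.2 ∈ M p.1) =>
      f p.1 + ((c x p.2 - c p.1 p.2 : ℝ) : EReal)) (s, t) ht
  have hHne : ∀ x, H x ≠ ⊥ := fun x h =>
    EReal.coe_ne_bot _ (le_bot_iff.1 (h ▸ hHlb x s₀ t₀ ht₀ r₀ hr₀))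
  -- H is in the family
  have hmem : H ∈ cFamily c f (mapDom M) M := by
    refine ⟨⟨⟨hHne, ⟨s₀, ?_⟩⟩, g, ⟨?_, ?_⟩, funext fun x => (hHT x).symm⟩, ?_, hHf⟩
    · rw [hHf s₀ ⟨t₀, ht₀⟩, hr₀]
      exact EReal.coe_ne_top _
    · intro y
      by_cases hy : y ∈ mapIm M
      · obtain ⟨s, hs⟩ := hy
        obtain ⟨r, hr⟩ := cAnti_finite hf ⟨y, hs⟩
        rw [hgIm s y hs r hr]
        exact EReal.coe_ne_bot _
      · rw [hgOut y hy]
        simp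
    · refine ⟨t₀, ?_⟩
      rw [hgIm s₀ t₀ ht₀ r₀ hr₀]
      exact EReal.coe_ne_top _
    · intro s t ht x'
      obtain ⟨r, hr⟩ := cAnti_finite hf ⟨t, ht⟩
      have h1 : H s = (r : EReal) := by rw [hHf s ⟨t, ht⟩, hr]
      have h2 := hHlb x' s t ht r hr
      rw [h1]
      calc (r : EReal) + (c x' t : EReal)
          = ((r + (c x' t - c s t) : ℝ) : EReal) + (c s t : EReal) := by
            norm_cast; ring
        _ ≤ H x' + (c s t : EReal) := add_le_add_left h2 _
  -- H is below every member of the family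
  have hlow : ∀ h ∈ cFamily c f (mapDom M) M, ∀ x, H x ≤ h x := by
    rintro h ⟨⟨⟨hhb, -⟩, -⟩, hsub, hagree⟩ x
    apply iSup₂_le
    rintro ⟨s, t⟩ ht
    simp only at ht ⊢
    obtain ⟨r, hr⟩ := cAnti_finite hf ⟨t, ht⟩
    have h1 : h s = (r : EReal) := by rw [hagree s ⟨t, ht⟩, hr]
    have h2 := hsub s t ht x
    rw [h1] at h2
    rw [hr, ← EReal.coe_add]
    exact eReal_key (hhb x) h2
  intro x
  have hEnv : lowerEnv c f (mapDom M) M x = H x := by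
    apply le_antisymm
    · exact iInf₂_le H hmem
    · exact le_iInf₂ fun h hh => hlow h hh x
  exact ⟨hEnv.trans (hHT x).symm, hEnv⟩
end
end

section
/- Let f : X → (-∞,+∞] be a c-antiderivative of a multivalued mapping M : X ⇉ Y and take S = dom(M). If h : X → (-∞,+∞] is c-convex, then h ∈ 𝒜_{[c,f|_{dom(M)},M]} if and only if α_{[c,f|_{dom(M)},M]} ≤ h ≤ γ_{[c,f|_{dom(M)},M]} pointwise, where α and γ denote the pointwise infimum and supremum of the family 𝒜_{[c,f|_{dom(M)},M]}. -/
noncomputable section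

open scoped Classical

variable {X Y : Type*}

/-- In the case `S = dom M`, a `c`-convex `h` belongs to
`𝒜_{[c, f|_{dom M}, M]}` iff `α_{[c, f|_{dom M}, M]} ≤ h ≤ γ_{[c, f|_{dom M}, M]}`. -/
theorem statement8 [Nonempty X] [Nonempty Y] (c : X → Y → ℝ) (f : X → EReal)
    (M : X → Set Y) (hf : IsCAntiderivative c f M)
    (hdom : (mapDom M).Nonempty)
    (h : X → EReal) (hconv : IsCConvex c h) :
    h ∈ cFamily c f (mapDom M) M ↔
      ∀ x, lowerEnv c f (mapDom M) M x ≤ h x ∧ h x ≤ upperEnv c f (mapDom M) M x := by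
  constructor
  · intro hh x
    exact ⟨iInf₂_le h hh, le_iSup₂ (f := fun g _ => g x) h hh⟩
  · intro hb
    -- On `dom M`, every member of the family equals `f`, so `h = f` there.
    have hsf : ∀ s ∈ mapDom M, h s = f s := by
      intro s hs
      have h1 : f s ≤ lowerEnv c f (mapDom M) M s :=
        le_iInf₂ fun g hg => (hg.2.2 s hs).ge
      have h2 : upperEnv c f (mapDom M) M s ≤ f s :=
        iSup₂_le fun g hg => (hg.2.2 s hs).le
      exact le_antisymm ((hb s).2.trans h2) (h1.trans (hb s).1)
    refine ⟨hconv, ?_, hsf⟩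
    intro x y hy x'
    have hxd : x ∈ mapDom M := ⟨y, hy⟩
    rw [hsf x hxd]
    -- Key lower bound: `f x + c x' y - c x y ≤ g x'` for every member `g`.
    have hlow : f x + (c x' y : EReal) - (c x y : EReal) ≤ h x' := by
      refine le_trans ?_ (hb x').1
      refine le_iInf₂ fun g hg => ?_
      have hgx : g x = f x := hg.2.2 x hxd
      have := hg.2.1 x y hy x'
      rw [hgx] at this
      rw [EReal.sub_le_iff_le_add (by simp) (by simp)]
      exact this
    rw [EReal.sub_le_iff_le_add (by simp) (by simp)] at hlow
    exact hlow
end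
end

section
/- If M : X ⇉ Y is a proper, c-cyclically monotone multivalued mapping and s ∈ dom(M), then Rockafellar's function R_{[c,M,s]} is a proper, c-convex c-antiderivative of M which satisfies R_{[c,M,s]}(s) = 0. -/
noncomputable section

open scoped Classical

variable {X Y : Type*}

/-! ### Auxiliary lemmas for statement9 -/

lemma exists_coe_of {a : EReal} (h1 : a ≠ ⊥) (h2 : a ≠ ⊤) : ∃ r : ℝ, a = ↑r := by
  induction a using EReal.rec with
  | bot => simp at h1
  | coe r => exact ⟨r, rfl⟩
  | top => simp at h2

lemma auxAdd {a b : EReal} {r q : ℝ} (h : a + (r : EReal) ≤ b + (q : EReal)) :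
    a ≤ b + ((q - r : ℝ) : EReal) := by
  have h2 := add_le_add_left h ((-r : ℝ) : EReal)
  rw [add_assoc, add_assoc, ← EReal.coe_add, ← EReal.coe_add] at h2
  simpa [sub_eq_add_neg] using h2

section RockAux

variable (c : X → Y → ℝ) (M : X → Set Y) (s : X)

lemma rock_le {x : X} {b : EReal}
    (h : ∀ (n : ℕ), 0 < n → ∀ (xs : ℕ → X) (ys : ℕ → Y),
      xs 0 = s → (∀ i < n, ys i ∈ M (xs i)) →
      ((∑ i ∈ Finset.range n,
        (c (if i + 1 < n then xs (i + 1) else x) (ys i) - c (xs i) (ys i)) : ℝ) : EReal) ≤ b) :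
    rockafellar c M s x ≤ b :=
  iSup_le fun n => iSup_le fun hn => iSup_le fun xs => iSup_le fun ys =>
    iSup_le fun hc => h n hn xs ys hc.1 hc.2

lemma le_rock {x : X} (n : ℕ) (hn : 0 < n) (xs : ℕ → X) (ys : ℕ → Y)
    (h0 : xs 0 = s) (hmem : ∀ i < n, ys i ∈ M (xs i)) :
    ((∑ i ∈ Finset.range n,
      (c (if i + 1 < n then xs (i + 1) else x) (ys i) - c (xs i) (ys i)) : ℝ) : EReal)
      ≤ rockafellar c M s x :=
  le_iSup_of_le n <| le_iSup_of_le hn <| le_iSup_of_le xs <| le_iSup_of_le ys <|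
    le_iSup_of_le ⟨h0, hmem⟩ le_rfl

lemma single_le_rock {x : X} {y0 : Y} (hy0 : y0 ∈ M s) :
    ((c x y0 - c s y0 : ℝ) : EReal) ≤ rockafellar c M s x := by
  have := le_rock c M s (x := x) 1 one_pos (fun _ => s) (fun _ => y0) rfl (fun _ _ => hy0)
  simpa using this

lemma rock_ne_bot {x : X} (hs : s ∈ mapDom M) : rockafellar c M s x ≠ ⊥ := by
  obtain ⟨y0, hy0⟩ := hs
  exact ((lt_of_lt_of_le (EReal.bot_lt_coe _) (single_le_rock c M s hy0))).ne'

lemma rock_s_nonneg (hs : s ∈ mapDom M) : (0 : EReal) ≤ rockafellar c M s s := by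
  obtain ⟨y0, hy0⟩ := hs
  have := single_le_rock c M s (x := s) hy0
  simpa using this

lemma rock_s_nonpos (hcyc : IsCCyclicallyMonotone c M) : rockafellar c M s s ≤ 0 := by
  refine rock_le c M s ?_
  intro n hn xs ys h0 hmem
  have hpos := hcyc n xs ys hmem
  have hEq : ∑ i ∈ Finset.range n,
      (c (if i + 1 < n then xs (i + 1) else s) (ys i) - c (xs i) (ys i))
      = -∑ i ∈ Finset.range n, (c (xs i) (ys i) - c (xs ((i + 1) % n)) (ys i)) := by
    rw [← Finset.sum_neg_distrib]
    refine Finset.sum_congr rfl fun i hi => ?_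
    rw [Finset.mem_range] at hi
    by_cases h : i + 1 < n
    · rw [if_pos h, Nat.mod_eq_of_lt h]; ring
    · have : i + 1 = n := by omega
      rw [if_neg h, this, Nat.mod_self, h0]; ring
  rw [hEq]
  have : (((-∑ i ∈ Finset.range n,
      (c (xs i) (ys i) - c (xs ((i + 1) % n)) (ys i)) : ℝ)) : EReal) ≤ ((0 : ℝ) : EReal) := by
    exact_mod_cast neg_nonpos.mpr hpos
  simpa using this

lemma rock_s_eq (hcyc : IsCCyclicallyMonotone c M) (hs : s ∈ mapDom M) :
    rockafellar c M s s = 0 :=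
  le_antisymm (rock_s_nonpos c M s hcyc) (rock_s_nonneg c M s hs)

lemma rock_chain {x z : X} {y : Y} (hy : y ∈ M z) :
    rockafellar c M s z + ((c x y - c z y : ℝ) : EReal) ≤ rockafellar c M s x := by
  refine (EReal.le_sub_iff_add_le (Or.inl (EReal.coe_ne_bot _))
    (Or.inl (EReal.coe_ne_top _))).1 ?_
  refine rock_le c M s ?_
  intro n hn xs ys h0 hmem
  refine (EReal.le_sub_iff_add_le (Or.inl (EReal.coe_ne_bot _))
    (Or.inl (EReal.coe_ne_top _))).2 ?_
  rw [← EReal.coe_add]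
  have hmem' : ∀ i < n + 1,
      (fun j => if j < n then ys j else y) i ∈ M ((fun j => if j < n then xs j else z) i) := by
    intro i hi
    by_cases h : i < n
    · simpa [h] using hmem i h
    · simpa [h] using hy
  have h0' : (fun j => if j < n then xs j else z) 0 = s := by simp [hn, h0]
  have hle := le_rock c M s (x := x) (n + 1) (Nat.succ_pos n)
    (fun j => if j < n then xs j else z) (fun j => if j < n then ys j else y) h0' hmem'
  refine le_trans (le_of_eq ?_) hle
  norm_cast
  rw [Finset.sum_range_succ]
  congr 1
  · refine Finset.sum_congr rfl fun i hi => ?_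
    rw [Finset.mem_range] at hi
    simp only [if_pos hi, if_pos (show i + 1 < n + 1 by omega)]
  · simp

end RockAux

section RockAux2

variable (c : X → Y → ℝ) (M : X → Set Y) (s : X)

lemma rock_subdiff {z : X} {y : Y} (hy : y ∈ M z) (x' : X) :
    rockafellar c M s z + ((c x' y : ℝ) : EReal)
      ≤ rockafellar c M s x' + ((c z y : ℝ) : EReal) := by
  have h := rock_chain c M s (x := x') hy
  have h2 := add_le_add_left h ((c z y : ℝ) : EReal)
  rwa [add_assoc, ← EReal.coe_add, sub_add_cancel] at h2

lemma rock_ne_top_of_dom (hcyc : IsCCyclicallyMonotone c M) (hs : s ∈ mapDom M)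
    {z : X} (hz : z ∈ mapDom M) : rockafellar c M s z ≠ ⊤ := by
  obtain ⟨y, hy⟩ := hz
  have h := rock_chain c M s (x := s) hy
  rw [rock_s_eq c M s hcyc hs] at h
  intro htop
  rw [htop, EReal.top_add_coe] at h
  simp at h

lemma g_le (hcyc : IsCCyclicallyMonotone c M) (hs : s ∈ mapDom M)
    {z : X} {y : Y} (hy : y ∈ M z) :
    cTransform c (rockafellar c M s) y ≤ ((c z y : ℝ) : EReal) - rockafellar c M s z := by
  obtain ⟨rz, hrz⟩ := exists_coe_of (rock_ne_bot c M s hs)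
    (rock_ne_top_of_dom c M s hcyc hs ⟨y, hy⟩)
  refine iSup_le fun x' => ?_
  have h := rock_subdiff c M s hy x'
  rw [hrz] at h ⊢
  rw [← EReal.coe_sub]
  refine (EReal.sub_le_iff_le_add (Or.inl (rock_ne_bot c M s hs))
    (Or.inr (EReal.coe_ne_bot _))).2 ?_
  rw [add_comm]
  exact auxAdd (by rwa [add_comm ((rz : ℝ) : EReal)] at h)

lemma le_g {x : X} {y : Y} :
    ((c x y : ℝ) : EReal) - rockafellar c M s x ≤ cTransform c (rockafellar c M s) y :=
  le_iSup (fun x' => ((c x' y : ℝ) : EReal) - rockafellar c M s x') x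

lemma g_ne_bot (hcyc : IsCCyclicallyMonotone c M) (hs : s ∈ mapDom M) (y : Y) :
    cTransform c (rockafellar c M s) y ≠ ⊥ := by
  have h := le_g c M s (x := s) (y := y)
  rw [rock_s_eq c M s hcyc hs, sub_zero] at h
  exact ((lt_of_lt_of_le (EReal.bot_lt_coe _) h)).ne'

lemma cg_le (hcyc : IsCCyclicallyMonotone c M) (hs : s ∈ mapDom M) (x : X) (y : Y) :
    ((c x y : ℝ) : EReal) - cTransform c (rockafellar c M s) y ≤ rockafellar c M s x := by
  have h1 := le_g c M s (x := x) (y := y)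
  have h2 := (EReal.sub_le_iff_le_add (Or.inl (rock_ne_bot c M s hs))
    (Or.inr (g_ne_bot c M s hcyc hs y))).1 h1
  refine (EReal.sub_le_iff_le_add (Or.inl (g_ne_bot c M s hcyc hs y))
    (Or.inr (rock_ne_bot c M s hs))).2 ?_
  rwa [add_comm]

lemma rock_le_sup_cg (hcyc : IsCCyclicallyMonotone c M) (hs : s ∈ mapDom M) (x : X) :
    rockafellar c M s x ≤ ⨆ y, (((c x y : ℝ) : EReal) - cTransform c (rockafellar c M s) y) := by
  refine rock_le c M s ?_
  intro n hn xs ys h0 hmem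
  obtain ⟨m, rfl⟩ : ∃ m, n = m + 1 := ⟨n - 1, by omega⟩
  set z := xs m with hz
  set yl := ys m with hyl
  have hylz : yl ∈ M z := hmem m (by omega)
  obtain ⟨rz, hrz⟩ := exists_coe_of (rock_ne_bot c M s hs)
    (rock_ne_top_of_dom c M s hcyc hs ⟨yl, hylz⟩)
  -- truncated sum
  have hT : ((∑ i ∈ Finset.range m,
      (c (if i + 1 < m then xs (i + 1) else z) (ys i) - c (xs i) (ys i)) : ℝ) : EReal)
      ≤ rockafellar c M s z := by
    rcases Nat.eq_zero_or_pos m with hm0 | hm0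
    · subst hm0
      simpa [hz, h0] using rock_s_nonneg c M s hs
    · exact le_rock c M s (x := z) m hm0 xs ys h0 (fun i hi => hmem i (by omega))
  have hsum : ∑ i ∈ Finset.range (m + 1),
      (c (if i + 1 < m + 1 then xs (i + 1) else x) (ys i) - c (xs i) (ys i))
      = (∑ i ∈ Finset.range m,
          (c (if i + 1 < m then xs (i + 1) else z) (ys i) - c (xs i) (ys i)))
        + (c x yl - c z yl) := by
    rw [Finset.sum_range_succ]
    congr 1
    · refine Finset.sum_congr rfl fun i hi => ?_
      rw [Finset.mem_range] at hi
      rw [if_pos (show i + 1 < m + 1 by omega)]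
      by_cases h2 : i + 1 < m
      · rw [if_pos h2]
      · rw [if_neg h2, hz, show m = i + 1 by omega]
    · simp [hz, hyl]
  rw [hsum, EReal.coe_add]
  have step1 : ((∑ i ∈ Finset.range m,
      (c (if i + 1 < m then xs (i + 1) else z) (ys i) - c (xs i) (ys i)) : ℝ) : EReal)
      + ((c x yl - c z yl : ℝ) : EReal)
      ≤ rockafellar c M s z + ((c x yl - c z yl : ℝ) : EReal) :=
    add_le_add_left hT _
  refine le_trans step1 (le_trans ?_ (le_iSup
    (fun y => ((c x y : ℝ) : EReal) - cTransform c (rockafellar c M s) y) yl))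
  -- R z + δ ≤ c x yl - g yl
  have hg : cTransform c (rockafellar c M s) yl ≤ ((c z yl - rz : ℝ) : EReal) := by
    have := g_le c M s hcyc hs hylz
    rwa [hrz, ← EReal.coe_sub] at this
  have h3 : ((c x yl : ℝ) : EReal) - ((c z yl - rz : ℝ) : EReal)
      ≤ ((c x yl : ℝ) : EReal) - cTransform c (rockafellar c M s) yl :=
    EReal.sub_le_sub le_rfl hg
  refine le_trans (le_of_eq ?_) h3
  rw [hrz, ← EReal.coe_add, ← EReal.coe_sub]
  norm_cast
  ring

end RockAux2

/-- If `M` is proper and `c`-cyclically monotone and `s ∈ dom M`, then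
Rockafellar's function `R_{[c,M,s]}` is a proper `c`-convex `c`-antiderivative of `M`
with `R_{[c,M,s]}(s) = 0`. -/
theorem statement9 [Nonempty X] [Nonempty Y] (c : X → Y → ℝ) (M : X → Set Y)
    (hM : (mapDom M).Nonempty) (hcyc : IsCCyclicallyMonotone c M)
    (s : X) (hs : s ∈ mapDom M) :
    ProperFn (rockafellar c M s) ∧
      IsCConvex c (rockafellar c M s) ∧
      IsCAntiderivative c (rockafellar c M s) M ∧
      rockafellar c M s s = 0 := by
  have hRs : rockafellar c M s s = 0 := rock_s_eq c M s hcyc hs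
  have hproper : ProperFn (rockafellar c M s) :=
    ⟨fun x => rock_ne_bot c M s hs, ⟨s, by rw [hRs]; simp⟩⟩
  have hgproper : ProperFn (cTransform c (rockafellar c M s)) := by
    constructor
    · exact g_ne_bot c M s hcyc hs
    · obtain ⟨y0, hy0⟩ := id hs
      refine ⟨y0, fun htop => ?_⟩
      have h := g_le c M s hcyc hs hy0
      rw [hRs, sub_zero, htop] at h
      exact (EReal.coe_ne_top _) (top_le_iff.1 h)
  have heq : rockafellar c M s
      = cTransform (fun y x => c x y) (cTransform c (rockafellar c M s)) := by
    funext x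
    refine le_antisymm ?_ (iSup_le fun y => cg_le c M s hcyc hs x y)
    exact rock_le_sup_cg c M s hcyc hs x
  exact ⟨hproper, ⟨hproper, cTransform c (rockafellar c M s), hgproper, heq⟩,
    ⟨hproper, fun x y hy x' => rock_subdiff c M s hy x'⟩, hRs⟩
end
end

section
/- Let f : X → (-∞,+∞] be a c-antiderivative of a multivalued mapping M : X ⇉ Y and let S be a nonempty subset of dom(M). Then the minimal element of 𝒜_{[c,f|_S,M]} (i.e., the minimal c-convex c-antiderivative of M equal to f on S) is given, for all x ∈ X, by α_{[c,f|_S,M]}(x) = sup_{s ∈ S} [ f(s) + R_{[c,M,s]}(x) ]; in particular this function belongs to 𝒜_{[c,f|_S,M]} and is ≤ every member of 𝒜_{[c,f|_S,M]}. -/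
noncomputable section

open scoped Classical

variable {X Y : Type*}

section Statement11Aux

variable {c : X → Y → ℝ} {M : X → Set Y} {f : X → EReal}

private lemma iSup_add_coe_le {ι : Sort*} {u : ι → EReal} {a : ℝ} {b : EReal}
    (h : ∀ i, u i + (a : EReal) ≤ b) : (⨆ i, u i) + (a : EReal) ≤ b := by
  rw [← EReal.le_sub_iff_add_le (Or.inl (EReal.coe_ne_bot a)) (Or.inl (EReal.coe_ne_top a))]
  exact iSup_le fun i =>
    (EReal.le_sub_iff_add_le (Or.inl (EReal.coe_ne_bot a)) (Or.inl (EReal.coe_ne_top a))).2 (h i)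

/-- The real value of a Rockafellar chain. -/
private def rockSum (c : X → Y → ℝ) (n : ℕ) (xs : ℕ → X) (ys : ℕ → Y) (x : X) : ℝ :=
  ∑ i ∈ Finset.range n, (c (if i + 1 < n then xs (i + 1) else x) (ys i) - c (xs i) (ys i))

private lemma rockafellar_eq (c : X → Y → ℝ) (M : X → Set Y) (s x : X) :
    rockafellar c M s x =
      ⨆ (n : ℕ) (_ : 0 < n) (xs : ℕ → X) (ys : ℕ → Y)
        (_ : xs 0 = s ∧ ∀ i < n, ys i ∈ M (xs i)),
          ((rockSum c n xs ys x : ℝ) : EReal) := rfl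

private lemma le_rockafellar {n : ℕ} (hn : 0 < n) {xs : ℕ → X} {ys : ℕ → Y} {s x : X}
    (h0 : xs 0 = s) (hy : ∀ i < n, ys i ∈ M (xs i)) :
    ((rockSum c n xs ys x : ℝ) : EReal) ≤ rockafellar c M s x := by
  rw [rockafellar_eq]
  exact le_iSup_of_le n <| le_iSup_of_le hn <| le_iSup_of_le xs <| le_iSup_of_le ys <|
    le_iSup_of_le ⟨h0, hy⟩ le_rfl

private lemma chain_le {h : X → EReal}
    (hsub : ∀ z y, y ∈ M z → y ∈ cSubdiff c h z) (xs : ℕ → X) (ys : ℕ → Y) :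
    ∀ n : ℕ, (∀ i < n, ys i ∈ M (xs i)) →
      h (xs 0) + ((∑ i ∈ Finset.range n,
          (c (xs (i + 1)) (ys i) - c (xs i) (ys i)) : ℝ) : EReal) ≤ h (xs n)
  | 0, _ => by simp
  | n + 1, hy => by
    have IH := chain_le hsub xs ys n (fun i hi => hy i (hi.trans (Nat.lt_succ_self n)))
    have hstep := hsub (xs n) (ys n) (hy n (Nat.lt_succ_self n)) (xs (n + 1))
    have h2 : h (xs n) + ((c (xs (n + 1)) (ys n) - c (xs n) (ys n) : ℝ) : EReal)
        ≤ h (xs (n + 1)) := by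
      rw [← (EReal.addLECancellable_coe (c (xs n) (ys n))).add_le_add_iff_right]
      calc h (xs n) + ((c (xs (n + 1)) (ys n) - c (xs n) (ys n) : ℝ) : EReal)
            + (c (xs n) (ys n) : EReal)
          = h (xs n) + (c (xs (n + 1)) (ys n) : EReal) := by
            rw [add_assoc, ← EReal.coe_add]
            norm_num
        _ ≤ h (xs (n + 1)) + (c (xs n) (ys n) : EReal) := hstep
    calc h (xs 0) + ((∑ i ∈ Finset.range (n + 1),
            (c (xs (i + 1)) (ys i) - c (xs i) (ys i)) : ℝ) : EReal)
        = h (xs 0) + ((∑ i ∈ Finset.range n,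
            (c (xs (i + 1)) (ys i) - c (xs i) (ys i)) : ℝ) : EReal)
            + ((c (xs (n + 1)) (ys n) - c (xs n) (ys n) : ℝ) : EReal) := by
          rw [Finset.sum_range_succ, EReal.coe_add, add_assoc]
      _ ≤ h (xs n) + ((c (xs (n + 1)) (ys n) - c (xs n) (ys n) : ℝ) : EReal) :=
          add_le_add_left IH _
      _ ≤ h (xs (n + 1)) := h2

private lemma chain_le' {h : X → EReal}
    (hsub : ∀ z y, y ∈ M z → y ∈ cSubdiff c h z) {n : ℕ} (hn : 0 < n)
    {xs : ℕ → X} {ys : ℕ → Y} {x : X} (hy : ∀ i < n, ys i ∈ M (xs i)) :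
    h (xs 0) + ((rockSum c n xs ys x : ℝ) : EReal) ≤ h x := by
  set xs' : ℕ → X := fun i => if i < n then xs i else x with hxs'
  have h0 : xs' 0 = xs 0 := if_pos hn
  have hnn : xs' n = x := if_neg (lt_irrefl n)
  have hsum : (∑ i ∈ Finset.range n, (c (xs' (i + 1)) (ys i) - c (xs' i) (ys i)))
      = rockSum c n xs ys x := by
    refine Finset.sum_congr rfl fun i hi => ?_
    rw [Finset.mem_range] at hi
    have h1 : xs' i = xs i := if_pos hi
    have h2 : xs' (i + 1) = if i + 1 < n then xs (i + 1) else x := rfl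
    rw [h1, h2]
  have hy' : ∀ i < n, ys i ∈ M (xs' i) := fun i hi => by
    rw [show xs' i = xs i from if_pos hi]; exact hy i hi
  have := chain_le hsub xs' ys n hy'
  rw [hsum, h0, hnn] at this
  exact this

private lemma add_rock_le {h : X → EReal}
    (hsub : ∀ z y, y ∈ M z → y ∈ cSubdiff c h z) {s x : X} {r : ℝ}
    (hr : h s = (r : EReal)) :
    (r : EReal) + rockafellar c M s x ≤ h x := by
  rw [add_comm, rockafellar_eq]
  refine iSup_add_coe_le fun n => iSup_add_coe_le fun hn => iSup_add_coe_le fun xs =>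
    iSup_add_coe_le fun ys => iSup_add_coe_le fun hp => ?_
  rw [add_comm, ← hr, ← hp.1]
  exact chain_le' hsub hn hp.2

private lemma f_real_on_dom (hf : IsCAntiderivative c f M) {s : X} (hs : s ∈ mapDom M) :
    ∃ r : ℝ, f s = (r : EReal) := by
  obtain ⟨y, hy⟩ := hs
  obtain ⟨x₀, hx₀⟩ := hf.1.2
  have hsub := hf.2 s y hy x₀
  have hned : f s ≠ ⊤ := by
    intro hT
    rw [hT, EReal.top_add_coe, top_le_iff] at hsub
    exact (EReal.add_lt_top hx₀ (EReal.coe_ne_top _)).ne hsub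
  have hneb := hf.1.1 s
  lift f s to ℝ using ⟨hned, hneb⟩ with r hr
  exact ⟨r, rfl⟩

private lemma rockSum_endpoint (c : X → Y → ℝ) (m : ℕ) (xs : ℕ → X) (ys : ℕ → Y)
    (x x' : X) :
    rockSum c (m + 1) xs ys x' = rockSum c (m + 1) xs ys x + (c x' (ys m) - c x (ys m)) := by
  unfold rockSum
  rw [Finset.sum_range_succ, Finset.sum_range_succ]
  have hfront : ∀ i ∈ Finset.range m,
      (c (if i + 1 < m + 1 then xs (i + 1) else x') (ys i) - c (xs i) (ys i))
        = (c (if i + 1 < m + 1 then xs (i + 1) else x) (ys i) - c (xs i) (ys i)) := by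
    intro i hi
    rw [Finset.mem_range] at hi
    rw [if_pos (by omega), if_pos (by omega)]
  rw [Finset.sum_congr rfl hfront, if_neg (lt_irrefl _), if_neg (lt_irrefl _)]
  ring

private lemma rockSum_extend (c : X → Y → ℝ) (n : ℕ) (xs : ℕ → X) (ys : ℕ → Y)
    (x x' : X) (y : Y) :
    rockSum c (n + 1) (fun i => if i < n then xs i else x)
        (fun i => if i < n then ys i else y) x'
      = rockSum c n xs ys x + (c x' y - c x y) := by
  unfold rockSum
  rw [Finset.sum_range_succ]
  have hfront : ∀ i ∈ Finset.range n,
      (c (if i + 1 < n + 1 then (if i + 1 < n then xs (i + 1) else x) else x')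
          ((fun i => if i < n then ys i else y) i)
        - c ((fun i => if i < n then xs i else x) i)
          ((fun i => if i < n then ys i else y) i))
      = (c (if i + 1 < n then xs (i + 1) else x) (ys i) - c (xs i) (ys i)) := by
    intro i hi
    rw [Finset.mem_range] at hi
    simp only [if_pos hi, if_pos (show i + 1 < n + 1 by omega)]
  rw [Finset.sum_congr rfl hfront]
  simp [lt_irrefl]

private lemma coe_sub_coe_sub_le {p : ℝ} {a : EReal} (ha : a ≠ ⊥) :
    (p : EReal) - ((p : EReal) - a) ≤ a := by
  induction a with
  | bot => exact absurd rfl ha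
  | coe q =>
    rw [← EReal.coe_sub, ← EReal.coe_sub, EReal.coe_le_coe_iff]
    linarith
  | top => exact le_top

end Statement11Aux

/-- The minimal element of `𝒜_{[c,f|_S,M]}` is
`α_{[c,f|_S,M]}(x) = sup_{s ∈ S} [f(s) + R_{[c,M,s]}(x)]`; in particular this function
belongs to the family and is below every member of it. -/
theorem statement11 [Nonempty X] [Nonempty Y] (c : X → Y → ℝ) (f : X → EReal)
    (M : X → Set Y) (hf : IsCAntiderivative c f M)
    (S : Set X) (hS : S.Nonempty) (hSdom : S ⊆ mapDom M) :
    (∀ x, lowerEnv c f S M x = ⨆ s : S, (f s + rockafellar c M s x)) ∧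
      (fun x => ⨆ s : S, (f s + rockafellar c M s x)) ∈ cFamily c f S M ∧
      ∀ h ∈ cFamily c f S M, ∀ x, (⨆ s : S, (f s + rockafellar c M s x)) ≤ h x := by
  have hSne : Nonempty ↥S := hS.to_subtype
  set φ : X → EReal := fun x => ⨆ s : S, (f (s : X) + rockafellar c M (s : X) x) with hφdef
  have hfs_real : ∀ s ∈ S, ∃ r : ℝ, f s = (r : EReal) := fun s hs =>
    f_real_on_dom hf (hSdom hs)
  -- φ is below every antiderivative of M agreeing with f on S
  have key1 : ∀ h : X → EReal, (∀ x y, y ∈ M x → y ∈ cSubdiff c h x) →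
      (∀ s ∈ S, h s = f s) → ∀ x, φ x ≤ h x := by
    intro h hsub hagree x
    refine iSup_le fun s => ?_
    obtain ⟨r, hr⟩ := hfs_real s s.2
    rw [hr]
    exact add_rock_le hsub (by rw [hagree s s.2, hr])
  have hφ_le_f : ∀ x, φ x ≤ f x := key1 f hf.2 (fun _ _ => rfl)
  -- φ agrees with f on S
  have hφ_agree : ∀ s ∈ S, φ s = f s := by
    intro s hs
    refine le_antisymm (hφ_le_f s) ?_
    obtain ⟨y, hy⟩ := hSdom hs
    have h0 : ((0 : ℝ) : EReal) ≤ rockafellar c M s s := by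
      have h1 : rockSum c 1 (fun _ => s) (fun _ => y) s = 0 := by
        simp [rockSum]
      have := le_rockafellar (c := c) (M := M) (x := s) one_pos (xs := fun _ => s) (ys := fun _ => y)
        rfl (fun i hi => by
          have : i = 0 := Nat.lt_one_iff.1 hi
          subst this; exact hy)
      rwa [h1] at this
    calc f s = f s + 0 := (add_zero _).symm
      _ ≤ f s + rockafellar c M s s := by
          refine add_le_add_right ?_ _
          simpa using h0
      _ ≤ φ s := le_iSup (fun t : S => f (t : X) + rockafellar c M (t : X) s) ⟨s, hs⟩
  -- φ is never ⊥
  have hφ_nebot : ∀ x, φ x ≠ ⊥ := by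
    intro x
    obtain ⟨s₀, hs₀⟩ := hS
    obtain ⟨y₀, hy₀⟩ := hSdom hs₀
    obtain ⟨r, hr⟩ := hfs_real s₀ hs₀
    have hrock : ((c x y₀ - c s₀ y₀ : ℝ) : EReal) ≤ rockafellar c M s₀ x := by
      have h1 : rockSum c 1 (fun _ => s₀) (fun _ => y₀) x = c x y₀ - c s₀ y₀ := by
        simp [rockSum]
      have := le_rockafellar (c := c) (M := M) (x := x) one_pos (xs := fun _ => s₀)
        (ys := fun _ => y₀) rfl (fun i hi => by
          have : i = 0 := Nat.lt_one_iff.1 hi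
          subst this; exact hy₀)
      rwa [h1] at this
    have hle : ((r + (c x y₀ - c s₀ y₀) : ℝ) : EReal) ≤ φ x := by
      calc ((r + (c x y₀ - c s₀ y₀) : ℝ) : EReal)
          = (r : EReal) + ((c x y₀ - c s₀ y₀ : ℝ) : EReal) := EReal.coe_add _ _
        _ ≤ (r : EReal) + rockafellar c M s₀ x := add_le_add_right hrock _
        _ = f s₀ + rockafellar c M s₀ x := by rw [hr]
        _ ≤ φ x := le_iSup (fun t : S => f (t : X) + rockafellar c M (t : X) x) ⟨s₀, hs₀⟩
    intro hB
    rw [hB, le_bot_iff] at hle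
    exact EReal.coe_ne_bot _ hle
  -- φ is a c-antiderivative of M
  have hφ_sub : ∀ x y, y ∈ M x → y ∈ cSubdiff c φ x := by
    intro x y hy x'
    show φ x + ((c x' y : ℝ) : EReal) ≤ φ x' + ((c x y : ℝ) : EReal)
    refine iSup_add_coe_le fun s => ?_
    obtain ⟨r, hr⟩ := hfs_real s s.2
    rw [hr]
    have key : rockafellar c M (s : X) x + ((c x' y : ℝ) : EReal)
        ≤ rockafellar c M (s : X) x' + ((c x y : ℝ) : EReal) := by
      rw [rockafellar_eq]
      refine iSup_add_coe_le fun n => iSup_add_coe_le fun hn => iSup_add_coe_le fun xs =>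
        iSup_add_coe_le fun ys => iSup_add_coe_le fun hp => ?_
      have hext := rockSum_extend c n xs ys x x' y
      have hch : ((rockSum c (n + 1) (fun i => if i < n then xs i else x)
          (fun i => if i < n then ys i else y) x' : ℝ) : EReal)
          ≤ rockafellar c M (s : X) x' := by
        refine le_rockafellar (Nat.succ_pos n) ?_ ?_
        · show (if 0 < n then xs 0 else x) = (s : X)
          rw [if_pos hn, hp.1]
        · intro i hi
          by_cases h2 : i < n
          · simpa [h2] using hp.2 i h2
          · have : i = n := by omega
            subst this
            simpa [lt_irrefl] using hy
      calc ((rockSum c n xs ys x : ℝ) : EReal) + ((c x' y : ℝ) : EReal)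
          = ((rockSum c (n + 1) (fun i => if i < n then xs i else x)
              (fun i => if i < n then ys i else y) x' + c x y : ℝ) : EReal) := by
            rw [← EReal.coe_add, hext]
            exact congrArg Real.toEReal (by ring)
        _ = ((rockSum c (n + 1) (fun i => if i < n then xs i else x)
              (fun i => if i < n then ys i else y) x' : ℝ) : EReal)
              + ((c x y : ℝ) : EReal) := EReal.coe_add _ _
        _ ≤ rockafellar c M (s : X) x' + ((c x y : ℝ) : EReal) := add_le_add_left hch _
    calc (r : EReal) + rockafellar c M (s : X) x + ((c x' y : ℝ) : EReal)
        = (r : EReal) + (rockafellar c M (s : X) x + ((c x' y : ℝ) : EReal)) := add_assoc _ _ _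
      _ ≤ (r : EReal) + (rockafellar c M (s : X) x' + ((c x y : ℝ) : EReal)) :=
          add_le_add_right key _
      _ = ((r : EReal) + rockafellar c M (s : X) x') + ((c x y : ℝ) : EReal) :=
          (add_assoc _ _ _).symm
      _ ≤ φ x' + ((c x y : ℝ) : EReal) := by
          refine add_le_add_left ?_ _
          rw [← hr]
          exact le_iSup (fun t : S => f (t : X) + rockafellar c M (t : X) x') s
  -- φ is proper
  obtain ⟨x₀, hx₀⟩ := hf.1.2
  have hφx₀_netop : φ x₀ ≠ ⊤ := fun hT => hx₀ (top_le_iff.1 (hT ▸ hφ_le_f x₀))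
  have hφ_proper : ProperFn φ := ⟨hφ_nebot, x₀, hφx₀_netop⟩
  -- the dual potential
  set g : Y → EReal := fun y => ⨆ x', ((c x' y : ℝ) : EReal) - φ x' with hgdef
  have hg_nebot : ∀ y, g y ≠ ⊥ := by
    intro y
    have hb := hφ_nebot x₀
    lift φ x₀ to ℝ using ⟨hφx₀_netop, hb⟩ with p hp
    have hterm : ((c x₀ y - p : ℝ) : EReal) ≤ g y := by
      have := le_iSup (fun x' => ((c x' y : ℝ) : EReal) - φ x') x₀
      rwa [← hp, ← EReal.coe_sub] at this
    intro hB
    rw [hB, le_bot_iff] at hterm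
    exact EReal.coe_ne_bot _ hterm
  obtain ⟨s₀, hs₀⟩ := hS
  obtain ⟨y₀, hy₀⟩ := hSdom hs₀
  obtain ⟨r₀, hr₀⟩ := hfs_real s₀ hs₀
  have hφs₀ : φ s₀ = (r₀ : EReal) := by rw [hφ_agree s₀ hs₀, hr₀]
  have hg_netop : ∃ y, g y ≠ ⊤ := by
    refine ⟨y₀, ?_⟩
    have hle : g y₀ ≤ ((c s₀ y₀ - r₀ : ℝ) : EReal) := by
      refine iSup_le fun x' => ?_
      have hsub' := hφ_sub s₀ y₀ hy₀ x'
      rw [hφs₀] at hsub'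
      rw [EReal.sub_le_iff_le_add (Or.inl (hφ_nebot x'))
        (Or.inr (EReal.coe_ne_bot _))]
      rw [← (EReal.addLECancellable_coe r₀).add_le_add_iff_right]
      calc ((c x' y₀ : ℝ) : EReal) + (r₀ : EReal)
          = (r₀ : EReal) + ((c x' y₀ : ℝ) : EReal) := add_comm _ _
        _ ≤ φ x' + ((c s₀ y₀ : ℝ) : EReal) := hsub'
        _ = ((c s₀ y₀ - r₀ : ℝ) : EReal) + φ x' + (r₀ : EReal) := by
            rw [add_right_comm, ← EReal.coe_add,
              show (c s₀ y₀ - r₀ + r₀ : ℝ) = c s₀ y₀ by ring, add_comm]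
    intro hT
    rw [hT, top_le_iff] at hle
    exact EReal.coe_ne_top _ hle
  -- φ = g^c
  have hφ_eq : φ = cTransform (fun y x => c x y) g := by
    funext x
    refine le_antisymm ?_ ?_
    · -- φ x ≤ sup_y (c x y - g y)
      refine iSup_le fun s => ?_
      obtain ⟨r, hr⟩ := hfs_real s s.2
      rw [hr, add_comm, rockafellar_eq]
      refine iSup_add_coe_le fun n => iSup_add_coe_le fun hn => iSup_add_coe_le fun xs =>
        iSup_add_coe_le fun ys => iSup_add_coe_le fun hp => ?_
      obtain ⟨m, rfl⟩ : ∃ m, n = m + 1 := ⟨n - 1, (Nat.succ_pred_eq_of_pos hn).symm⟩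
      set a : ℝ := rockSum c (m + 1) xs ys x + r with ha
      have hgle : g (ys m) ≤ ((c x (ys m) - a : ℝ) : EReal) := by
        refine iSup_le fun x' => ?_
        have hkey : ((a - c x (ys m) + c x' (ys m) : ℝ) : EReal) ≤ φ x' := by
          have hrs := rockSum_endpoint c m xs ys x x'
          have heq : (a - c x (ys m) + c x' (ys m) : ℝ)
              = r + rockSum c (m + 1) xs ys x' := by
            rw [hrs, ha]; ring
          rw [heq, EReal.coe_add]
          calc (r : EReal) + ((rockSum c (m + 1) xs ys x' : ℝ) : EReal)
              ≤ (r : EReal) + rockafellar c M (s : X) x' :=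
                add_le_add_right (le_rockafellar (Nat.succ_pos m) hp.1 hp.2) _
            _ = f (s : X) + rockafellar c M (s : X) x' := by rw [hr]
            _ ≤ φ x' := le_iSup (fun t : S => f (t : X) + rockafellar c M (t : X) x') s
        calc ((c x' (ys m) : ℝ) : EReal) - φ x'
            ≤ ((c x' (ys m) : ℝ) : EReal)
              - ((a - c x (ys m) + c x' (ys m) : ℝ) : EReal) :=
              EReal.sub_le_sub le_rfl hkey
          _ = ((c x (ys m) - a : ℝ) : EReal) := by
              rw [← EReal.coe_sub]
              exact congrArg Real.toEReal (by ring)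
      refine le_iSup_of_le (ys m) ?_
      have hcoe : ((rockSum c (m + 1) xs ys x : ℝ) : EReal) + (r : EReal)
          = ((a : ℝ) : EReal) := by rw [← EReal.coe_add, ha]
      rw [hcoe, EReal.le_sub_iff_add_le (Or.inr (EReal.coe_ne_bot _))
        (Or.inr (EReal.coe_ne_top _))]
      calc ((a : ℝ) : EReal) + g (ys m)
          ≤ ((a : ℝ) : EReal) + ((c x (ys m) - a : ℝ) : EReal) := add_le_add_right hgle _
        _ = ((c x (ys m) : ℝ) : EReal) := by
            rw [← EReal.coe_add]
            exact congrArg Real.toEReal (by ring)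
    · -- sup_y (c x y - g y) ≤ φ x
      refine iSup_le fun y => ?_
      have h1 : ((c x y : ℝ) : EReal) - φ x ≤ g y :=
        le_iSup (fun x' => ((c x' y : ℝ) : EReal) - φ x') x
      calc ((c x y : ℝ) : EReal) - g y
          ≤ ((c x y : ℝ) : EReal) - (((c x y : ℝ) : EReal) - φ x) :=
            EReal.sub_le_sub le_rfl h1
        _ ≤ φ x := coe_sub_coe_sub_le (hφ_nebot x)
  have hφ_conv : IsCConvex c φ := ⟨hφ_proper, g, ⟨hg_nebot, hg_netop⟩, hφ_eq⟩
  have hmem : φ ∈ cFamily c f S M := ⟨hφ_conv, hφ_sub, hφ_agree⟩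
  refine ⟨?_, hmem, fun h hh x => key1 h hh.2.1 hh.2.2 x⟩
  intro x
  refine le_antisymm ?_ ?_
  · exact iInf₂_le φ hmem
  · exact le_iInf₂ fun h hh => key1 h hh.2.1 hh.2.2 x
end
end

section
/- Let X and Y be sets, c : X × Y → ℝ, X' ⊆ X, Y' ⊆ Y, and let c' be the restriction of c to X' × Y'. Let f : X → (-∞,+∞] be c-convex, let M : X' ⇉ Y' be any multivalued mapping with G(M) ⊆ G(∂_c f) ∩ (X' × Y'), and let S be a nonempty subset of dom(M). Then the function f̃ := f|_{X'} + ι_{dom(M)} (equal to f on dom(M) and +∞ on X' \ dom(M)) is a c'-antiderivative of M with f̃|_S = f|_S; consequently, the set 𝒜_{[c',f|_S,M]} of all c'-convex functions f' : X' → (-∞,+∞] with G(M) ⊆ G(∂_{c'} f') and f'|_S = f|_S is nonempty. -/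
noncomputable section

open scoped Classical

variable {X Y : Type*}

section Aux

variable {X Y : Type*}

private lemma aux_sub_le {r r' : ℝ} {a b : EReal} (ha : a ≠ ⊥) (hb : b ≠ ⊥) (hb' : b ≠ ⊤)
    (h : b + (r' : EReal) ≤ a + (r : EReal)) : (r' : EReal) - a ≤ (r : EReal) - b := by
  lift b to ℝ using ⟨hb', hb⟩
  induction a with
  | bot => exact absurd rfl ha
  | top => simp [EReal.sub_top]
  | coe a =>
      rw [← EReal.coe_add, ← EReal.coe_add, EReal.coe_le_coe_iff] at h
      rw [← EReal.coe_sub, ← EReal.coe_sub, EReal.coe_le_coe_iff]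
      linarith

private lemma aux_sub_le' {r s : ℝ} {a : EReal} (h : ((s - r : ℝ) : EReal) ≤ a) :
    (s : EReal) - a ≤ (r : EReal) := by
  induction a with
  | bot => exact absurd (le_bot_iff.mp h) (EReal.coe_ne_bot _)
  | top => simp [EReal.sub_top]
  | coe a =>
      rw [EReal.coe_le_coe_iff] at h
      rw [← EReal.coe_sub, EReal.coe_le_coe_iff]
      linarith

private lemma key_gval (c : X → Y → ℝ) (f : X → EReal) (hbot : ∀ x, f x ≠ ⊥)
    {x : X} (hx : f x ≠ ⊤) {y : Y} (hy : y ∈ cSubdiff c f x) :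
    cTransform c f y = (c x y : EReal) - f x := by
  refine le_antisymm (iSup_le fun x' => ?_) (le_iSup (fun x' => (c x' y : EReal) - f x') x)
  lift f x to ℝ using ⟨hx, hbot x⟩ with r hr
  exact aux_sub_le (hbot x') (by simp [← hr]) (by simp [← hr]) (by rw [hr]; exact hy x')

private lemma key_hval (c : X → Y → ℝ) (f : X → EReal) (hbot : ∀ x, f x ≠ ⊥)
    {x : X} (hx : f x ≠ ⊤) {y : Y} (hy : y ∈ cSubdiff c f x) :
    cTransform (fun y x => c x y) (cTransform c f) x = f x := by
  obtain ⟨r, hr⟩ : ∃ r : ℝ, f x = (r : EReal) := by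
    lift f x to ℝ using ⟨hx, hbot x⟩ with r hr; exact ⟨r, rfl⟩
  refine le_antisymm (iSup_le fun y' => ?_) ?_
  · have h1 : ((c x y' - r : ℝ) : EReal) ≤ cTransform c f y' := by
      have := le_iSup (fun x' => (c x' y' : EReal) - f x') x
      rwa [hr, ← EReal.coe_sub] at this
    rw [hr]
    exact aux_sub_le' h1
  · have h2 : cTransform c f y = (c x y : EReal) - f x := key_gval c f hbot hx hy
    have h3 : (c x y : EReal) - cTransform c f y = f x := by
      rw [h2, hr, ← EReal.coe_sub, ← EReal.coe_sub, EReal.coe_eq_coe_iff]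
      ring
    rw [← h3]
    exact le_iSup (fun y' => (c x y' : EReal) - cTransform c f y') y

private lemma key_sub (c : X → Y → ℝ) (f : X → EReal) (hbot : ∀ x, f x ≠ ⊥)
    {x : X} (hx : f x ≠ ⊤) {y : Y} (hy : y ∈ cSubdiff c f x) :
    y ∈ cSubdiff c (cTransform (fun y x => c x y) (cTransform c f)) x := by
  intro x'
  obtain ⟨r, hr⟩ : ∃ r : ℝ, f x = (r : EReal) := by
    lift f x to ℝ using ⟨hx, hbot x⟩ with r hr; exact ⟨r, rfl⟩
  have h2 : cTransform c f y = ((c x y - r : ℝ) : EReal) := by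
    rw [key_gval c f hbot hx hy, hr, ← EReal.coe_sub]
  have h4 : ((c x' y - (c x y - r) : ℝ) : EReal) ≤
      cTransform (fun y x => c x y) (cTransform c f) x' := by
    have := le_iSup (fun y' => (c x' y' : EReal) - cTransform c f y') y
    rwa [h2, ← EReal.coe_sub] at this
  have h5 : cTransform (fun y x => c x y) (cTransform c f) x = f x :=
    key_hval c f hbot hx hy
  calc cTransform (fun y x => c x y) (cTransform c f) x + (c x' y : EReal)
      = ((c x' y - (c x y - r) : ℝ) : EReal) + (c x y : EReal) := by
        rw [h5, hr, ← EReal.coe_add, ← EReal.coe_add, EReal.coe_eq_coe_iff]; ring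
    _ ≤ cTransform (fun y x => c x y) (cTransform c f) x' + (c x y : EReal) :=
        add_le_add_left h4 _

end Aux

/-- refined restriction lemma. With `f` `c`-convex,
`G(M) ⊆ G(∂_c f) ∩ (X' × Y')` and `∅ ≠ S ⊆ dom M`, the function
`f̃ = f|_{X'} + ι_{dom M}` is a `c'`-antiderivative of `M` coinciding with `f` on `S`;
consequently the family `𝒜_{[c', f|_S, M]}` is nonempty. -/
theorem statement14 [Nonempty X] [Nonempty Y] (c : X → Y → ℝ)
    (X' : Set X) (Y' : Set Y) [Nonempty X'] [Nonempty Y']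
    (f : X → EReal) (hf : IsCConvex c f)
    (M : X' → Set Y')
    (hM : ∀ (x : X') (y : Y'), y ∈ M x → (y : Y) ∈ cSubdiff c f x)
    (S : Set X') (hS : S.Nonempty) (hSdom : S ⊆ mapDom M) :
    (IsCAntiderivative (fun (x : X') (y : Y') => c x y)
          (fun x => f x + indicatorE (mapDom M) x) M ∧
        ∀ s ∈ S, f (s : X) + indicatorE (mapDom M) s = f s) ∧
      (cFamily (fun (x : X') (y : Y') => c x y) (fun x : X' => f x) S M).Nonempty := by
  obtain ⟨⟨hfbot, x₀, hx₀⟩, _⟩ := hf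
  obtain ⟨s₀, hs₀⟩ := hS
  set c' : X' → Y' → ℝ := fun x y => c x y with hc'
  set F : X' → EReal := fun x => f x + indicatorE (mapDom M) x with hF
  have hdomtop : ∀ x : X', x ∈ mapDom M → f (x : X) ≠ ⊤ := by
    intro x hx htop
    obtain ⟨y, hy⟩ := hx
    have h1 := hM x y hy x₀
    rw [htop, EReal.top_add_coe] at h1
    obtain ⟨r, hr⟩ : ∃ r : ℝ, f x₀ = (r : EReal) := by
      lift f x₀ to ℝ using ⟨hx₀, hfbot x₀⟩ with r hr; exact ⟨r, rfl⟩
    rw [hr, ← EReal.coe_add, top_le_iff] at h1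
    exact EReal.coe_ne_top _ h1
  have hFeq : ∀ x : X', x ∈ mapDom M → F x = f (x : X) := by
    intro x hx
    simp only [hF, indicatorE, if_pos hx, add_zero]
  have hFtop : ∀ x : X', x ∉ mapDom M → F x = ⊤ := by
    intro x hx
    simp only [hF, indicatorE, if_neg hx]
    exact EReal.add_top_of_ne_bot (hfbot x)
  have hFbot : ∀ x : X', F x ≠ ⊥ := by
    intro x
    simp only [hF]
    rw [ne_eq, EReal.add_eq_bot_iff]
    rintro (h | h)
    · exact hfbot x h
    · simp only [indicatorE] at h
      split_ifs at h <;> simp_all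
  have hFdomtop : ∀ x : X', x ∈ mapDom M → F x ≠ ⊤ := by
    intro x hx
    rw [hFeq x hx]; exact hdomtop x hx
  have hFproper : ProperFn F :=
    ⟨hFbot, s₀, hFdomtop s₀ (hSdom hs₀)⟩
  have hsub : ∀ (x : X') (y : Y'), y ∈ M x → y ∈ cSubdiff c' F x := by
    intro x y hy x'
    have hxdom : x ∈ mapDom M := ⟨y, hy⟩
    by_cases hx' : x' ∈ mapDom M
    · rw [hFeq x hxdom, hFeq x' hx']
      exact hM x y hy x'
    · rw [hFtop x' hx', EReal.top_add_coe]
      exact le_top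
  refine ⟨⟨⟨hFproper, hsub⟩, fun s hsS => by
    simpa using hFeq s (hSdom hsS)⟩, ?_⟩
  -- second part: the double c'-transform of F is in the family
  set g : Y' → EReal := cTransform c' F with hg
  set h : X' → EReal := cTransform (fun y x => c' x y) g with hh
  have hgval : ∀ (x : X') (y : Y'), y ∈ M x → g y = (c' x y : EReal) - F x := by
    intro x y hy
    exact key_gval c' F hFbot (hFdomtop x ⟨y, hy⟩) (hsub x y hy)
  have hhval : ∀ (x : X') (y : Y'), y ∈ M x → h x = F x := by
    intro x y hy
    exact key_hval c' F hFbot (hFdomtop x ⟨y, hy⟩) (hsub x y hy)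
  have hhsub : ∀ (x : X') (y : Y'), y ∈ M x → y ∈ cSubdiff c' h x := by
    intro x y hy
    exact key_sub c' F hFbot (hFdomtop x ⟨y, hy⟩) (hsub x y hy)
  obtain ⟨y₀, hy₀⟩ := hSdom hs₀
  obtain ⟨r₀, hr₀⟩ : ∃ r : ℝ, F s₀ = (r : EReal) := by
    lift F s₀ to ℝ using ⟨hFdomtop s₀ (hSdom hs₀), hFbot s₀⟩ with r hr; exact ⟨r, rfl⟩
  have hgy₀ : g y₀ = ((c' s₀ y₀ - r₀ : ℝ) : EReal) := by
    rw [hgval s₀ y₀ hy₀, hr₀, ← EReal.coe_sub]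
  have hgbot : ∀ y : Y', g y ≠ ⊥ := by
    intro y hbot
    have h1 : ((c' s₀ y - r₀ : ℝ) : EReal) ≤ g y := by
      have := le_iSup (fun x' => (c' x' y : EReal) - F x') s₀
      rwa [hr₀, ← EReal.coe_sub] at this
    rw [hbot, le_bot_iff] at h1
    exact EReal.coe_ne_bot _ h1
  have hgproper : ProperFn g := ⟨hgbot, y₀, by rw [hgy₀]; exact EReal.coe_ne_top _⟩
  have hhbot : ∀ x : X', h x ≠ ⊥ := by
    intro x hbot
    have h1 : ((c' x y₀ - (c' s₀ y₀ - r₀) : ℝ) : EReal) ≤ h x := by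
      have := le_iSup (fun y' => (c' x y' : EReal) - g y') y₀
      rwa [hgy₀, ← EReal.coe_sub] at this
    rw [hbot, le_bot_iff] at h1
    exact EReal.coe_ne_bot _ h1
  have hhproper : ProperFn h := ⟨hhbot, s₀, by
    rw [hhval s₀ y₀ hy₀, hr₀]; exact EReal.coe_ne_top _⟩
  refine ⟨h, ⟨hhproper, g, hgproper, rfl⟩, hhsub, fun s hsS => ?_⟩
  obtain ⟨ys, hys⟩ := hSdom hsS
  rw [hhval s ys hys, hFeq s (hSdom hsS)]
end
end

section
/- Let (X,d) be a metric space and let f : X → (-∞,+∞] be a proper function. The following assertions are equivalent: (1) f is 1-Lipschitz; (2) f^{−d} = −f; (3) f is (−d)-convex; (4) f is a (−d)-antiderivative of the identity mapping I : X → X, i.e., G(I) ⊆ G(∂_{−d} f). In any of these cases f is real-valued (takes no infinite values). -/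
noncomputable section

open scoped Classical

variable {X Y : Type*}

/-- A proper `f : X → (-∞,+∞]` is `1`-Lipschitz: it is real-valued and
`|f(x) - f(y)| ≤ d(x,y)` for all `x, y`. -/
def IsLip1E {X : Type*} [MetricSpace X] (f : X → EReal) : Prop :=
  (∀ x, f x ≠ ⊥ ∧ f x ≠ ⊤) ∧ ∀ x y, |(f x).toReal - (f y).toReal| ≤ dist x y


private lemma ereal_sub_helper (a b c : ℝ) (h : EReal) (hab : a ≤ b + c) :
    (a : EReal) - h ≤ ((b : EReal) - h) + (c : EReal) := by
  induction h using EReal.rec with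
  | bot =>
      have h1 : (b : EReal) - ⊥ = ⊤ := by simp [sub_eq_add_neg]
      have h2 : (⊤ : EReal) + (c : EReal) = ⊤ := by simp
      rw [h1, h2]; exact le_top
  | coe x =>
      rw [← EReal.coe_sub, ← EReal.coe_sub, ← EReal.coe_add]
      exact EReal.coe_le_coe_iff.mpr (by linarith)
  | top =>
      have h1 : (a : EReal) - ⊤ = ⊥ := by simp [sub_eq_add_neg]
      rw [h1]; exact bot_le

private lemma lip_of_P {X : Type*} [MetricSpace X] (f : X → EReal) (hf : ProperFn f)
    (P : ∀ x x', f x ≤ f x' + (dist x x' : EReal)) : IsLip1E f := by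
  obtain ⟨hbot, x0, hx0⟩ := hf
  have htop : ∀ x, f x ≠ ⊤ := by
    intro x hx
    have h := P x x0
    rw [hx, ← EReal.coe_toReal hx0 (hbot x0), ← EReal.coe_add, top_le_iff] at h
    exact EReal.coe_ne_top _ h
  have key : ∀ x y, (f x).toReal ≤ (f y).toReal + dist x y := by
    intro x y
    have h := P x y
    rw [← EReal.coe_toReal (htop x) (hbot x), ← EReal.coe_toReal (htop y) (hbot y),
      ← EReal.coe_add] at h
    exact EReal.coe_le_coe_iff.mp h
  refine ⟨fun x => ⟨hbot x, htop x⟩, fun x y => ?_⟩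
  rw [abs_sub_le_iff]
  have h1 := key x y
  have h2 := key y x
  have h3 := dist_comm x y
  constructor <;> linarith

/-- for a proper `f : X → (-∞,+∞]` on a metric space, the following
are equivalent: (1) `f` is 1-Lipschitz; (2) `f^{-d} = -f`; (3) `f` is `(-d)`-convex;
(4) `f` is a `(-d)`-antiderivative of the identity, i.e. `G(I) ⊆ G(∂_{-d} f)`
(and in any of these cases `f` is real-valued, as recorded in (1)). -/
theorem statement15 {X : Type*} [MetricSpace X] [Nonempty X]
    (f : X → EReal) (hf : ProperFn f) :
    [IsLip1E f,
      cTransform (fun x y : X => -dist x y) f = fun y => -f y,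
      IsCConvex (fun x y : X => -dist x y) f,
      ∀ x : X, x ∈ cSubdiff (fun x y : X => -dist x y) f x].TFAE := by
  have hbot := hf.1
  obtain ⟨x0, hx0⟩ := hf.2
  tfae_have 1 → 2 := by
    intro h1
    obtain ⟨hfin, hlip⟩ := h1
    have hfr : ∀ x, f x = ((f x).toReal : EReal) :=
      fun x => (EReal.coe_toReal (hfin x).2 (hfin x).1).symm
    funext y
    simp only [cTransform]
    apply le_antisymm
    · apply iSup_le
      intro x
      rw [hfr x, hfr y, ← EReal.coe_sub, ← EReal.coe_neg]
      apply EReal.coe_le_coe_iff.mpr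
      have h := hlip y x
      rw [abs_sub_le_iff] at h
      have := dist_comm x y
      linarith [h.1]
    · refine le_iSup_of_le y ?_
      rw [hfr y, ← EReal.coe_neg, ← EReal.coe_sub]
      apply EReal.coe_le_coe_iff.mpr
      simp [dist_self]
  tfae_have 2 → 1 := by
    intro h2
    have htop : ∀ y, f y ≠ ⊤ := by
      intro y hy
      have h := congrFun h2 y
      simp only [cTransform] at h
      have hge : ((-dist x0 y : ℝ) : EReal) - f x0 ≤ -f y :=
        (le_iSup (fun x => ((-dist x y : ℝ) : EReal) - f x) x0).trans h.le
      rw [hy, ← EReal.coe_toReal hx0 (hbot x0), ← EReal.coe_sub] at hge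
      simp at hge
      rw [← EReal.coe_neg, ← EReal.coe_sub] at hge
      exact EReal.coe_ne_bot _ hge
    have hfr : ∀ x, f x = ((f x).toReal : EReal) :=
      fun x => (EReal.coe_toReal (htop x) (hbot x)).symm
    apply lip_of_P f hf
    intro x x'
    have h := congrFun h2 x
    simp only [cTransform] at h
    have hge : ((-dist x' x : ℝ) : EReal) - f x' ≤ -f x :=
      (le_iSup (fun z => ((-dist z x : ℝ) : EReal) - f z) x').trans h.le
    rw [hfr x, hfr x', ← EReal.coe_sub, ← EReal.coe_neg] at hge
    rw [hfr x, hfr x', ← EReal.coe_add]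
    apply EReal.coe_le_coe_iff.mpr
    have := EReal.coe_le_coe_iff.mp hge
    have := dist_comm x x'
    linarith
  tfae_have 1 → 3 := by
    intro h1
    obtain ⟨hfin, hlip⟩ := h1
    have hfr : ∀ x, f x = ((f x).toReal : EReal) :=
      fun x => (EReal.coe_toReal (hfin x).2 (hfin x).1).symm
    refine ⟨hf, fun y => -f y, ⟨fun y => ?_, x0, ?_⟩, ?_⟩
    · show -f y ≠ ⊥
      rw [hfr y, ← EReal.coe_neg]; exact EReal.coe_ne_bot _
    · show -f x0 ≠ ⊤
      rw [hfr x0, ← EReal.coe_neg]; exact EReal.coe_ne_top _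
    · funext x
      simp only [cTransform]
      apply le_antisymm
      · refine le_iSup_of_le x ?_
        rw [hfr x, ← EReal.coe_neg, ← EReal.coe_sub]
        apply EReal.coe_le_coe_iff.mpr
        simp [dist_self]
      · apply iSup_le
        intro y
        rw [hfr x, hfr y, ← EReal.coe_neg, ← EReal.coe_sub]
        apply EReal.coe_le_coe_iff.mpr
        have h := hlip y x
        rw [abs_sub_le_iff] at h
        have := dist_comm x y
        linarith [h.1]
  tfae_have 3 → 1 := by
    rintro ⟨hp, g, ⟨hgbot, y0, hy0⟩, hfg⟩
    apply lip_of_P f hf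
    intro x x'
    rw [hfg]
    simp only [cTransform]
    apply iSup_le
    intro y
    calc ((-dist x y : ℝ) : EReal) - g y
        ≤ (((-dist x' y : ℝ) : EReal) - g y) + ((dist x x' : ℝ) : EReal) := by
          apply ereal_sub_helper
          have := dist_triangle x' x y
          have := dist_comm x x'
          linarith
      _ ≤ (⨆ y', ((-dist x' y' : ℝ) : EReal) - g y') + ((dist x x' : ℝ) : EReal) :=
          add_le_add_left (le_iSup (fun y' => ((-dist x' y' : ℝ) : EReal) - g y') y) _
  tfae_have 1 → 4 := by
    intro h1 x x'
    obtain ⟨hfin, hlip⟩ := h1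
    have hfr : ∀ x, f x = ((f x).toReal : EReal) :=
      fun x => (EReal.coe_toReal (hfin x).2 (hfin x).1).symm
    rw [hfr x, hfr x', ← EReal.coe_add, ← EReal.coe_add]
    apply EReal.coe_le_coe_iff.mpr
    have h := hlip x x'
    rw [abs_sub_le_iff] at h
    have := dist_comm x' x
    simp only [dist_self]
    linarith [h.1]
  tfae_have 4 → 1 := by
    intro h4
    apply lip_of_P f hf
    intro x x'
    have h := h4 x x'
    simp only [dist_self, neg_zero, EReal.coe_zero, add_zero] at h
    have h2 := add_le_add_left h ((dist x' x : ℝ) : EReal)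
    rw [add_assoc, ← EReal.coe_add] at h2
    simp only [neg_add_cancel, EReal.coe_zero, add_zero] at h2
    rwa [dist_comm x x']
  tfae_finish
end
end
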